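/- arXiv:2011.14192 — 7 statements merged into one kernel-verified Lean document; each statement's English description precedes it below -/
import Mathlib

section
/- Let G=(V,E) be a finite directed graph on n vertices containing four pairwise distinct vertices s1, t1, s2, t2, and let G' be the delegation graph constructed from (G, s1, t1, s2, t2) as described. If G contains two vertex-disjoint directed paths, one from s1 to t1 and one from s2 to t2, then (G', 17n) is a yes-instance of Resolve Delegation. -/
/-- `v` is a sink of the directed graph with edge relation `E`: it has out-degree 0. -/
def IsSink {V : Type} (E : V → V → Prop) (v : V) : Prop := ∀ u, ¬ E v u

/-- Out-degree of `v` in the directed graph with edge relation `E`. -/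
noncomputable def outDeg {V : Type} (E : V → V → Prop) (v : V) : ℕ := Set.ncard {u | E v u}

/-- In-degree of `v` in the directed graph with edge relation `E`. -/
noncomputable def inDeg {V : Type} (E : V → V → Prop) (v : V) : ℕ := Set.ncard {u | E u v}

/-- `H` is a feasible solution of the Resolve Delegation instance `(E, lam)`:
`H` is a spanning subgraph of `E`, contains no directed cycle, every non-sink
vertex has out-degree exactly 1 in `H`, and for every sink `t` the number of
vertices having a directed path to `t` in `H` (including `t`) is at most `lam`. -/
def FeasibleSolution {V : Type} (E H : V → V → Prop) (lam : ℕ) : Prop :=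
  (∀ u v, H u v → E u v) ∧
  (∀ v, ¬ Relation.TransGen H v v) ∧
  (∀ v, ¬ IsSink E v → Set.ncard {u | H v u} = 1) ∧
  (∀ t, IsSink E t → Set.ncard {v | Relation.ReflTransGen H v t} ≤ lam)

/-- The Resolve Delegation instance `(E, lam)` is a yes-instance. -/
def YesInstance {V : Type} (E : V → V → Prop) (lam : ℕ) : Prop :=
  ∃ H : V → V → Prop, FeasibleSolution E H lam
/-- `p` is a directed path in the graph with edge relation `E` from `s` to `t`. -/
def IsPath {V : Type} (E : V → V → Prop) (s t : V) (p : List V) : Prop :=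
  p ≠ [] ∧ p.head? = some s ∧ p.getLast? = some t ∧ List.Chain' E p ∧ p.Nodup

/-- Vertex set of the delegation graph `G'` constructed from an `n`-vertex instance of
Two Vertex Disjoint Paths: the vertices `a_v` for `v ∈ V` together with the pairwise
disjoint path sets `D1, D1', D2, D2', D3` of sizes `10n, 5n, 5n, 10n, 15n`. -/
inductive RDVert (V : Type) (n : ℕ) : Type
  | orig : V → RDVert V n              -- the vertex a_v for v ∈ V
  | d1   : Fin (10 * n) → RDVert V n   -- the path D1,  last vertex d1   has index 10n-1
  | d1'  : Fin (5 * n) → RDVert V n    -- the path D1', first vertex d1' has index 0, last is t1'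
  | d2   : Fin (5 * n) → RDVert V n    -- the path D2,  last vertex d2   has index 5n-1
  | d2'  : Fin (10 * n) → RDVert V n   -- the path D2', first vertex d2' has index 0, last is t2'
  | d3   : Fin (15 * n) → RDVert V n   -- the path D3,  last vertex t3'  has index 15n-1
  deriving DecidableEq, Fintype

/-- Edge relation of the delegation graph `G'` constructed from the Two Vertex Disjoint
Paths instance `(E, s₁, t₁, s₂, t₂)` on an `n`-vertex graph. -/
inductive RDAdj {V : Type} (E : V → V → Prop) (s₁ t₁ s₂ t₂ : V) (n : ℕ) :
    RDVert V n → RDVert V n → Prop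
  | orig {u v : V} : E u v → RDAdj E s₁ t₁ s₂ t₂ n (.orig u) (.orig v)
  | d1step {i j : Fin (10 * n)} (h : (j : ℕ) = (i : ℕ) + 1) :
      RDAdj E s₁ t₁ s₂ t₂ n (.d1 i) (.d1 j)
  | d1'step {i j : Fin (5 * n)} (h : (j : ℕ) = (i : ℕ) + 1) :
      RDAdj E s₁ t₁ s₂ t₂ n (.d1' i) (.d1' j)
  | d2step {i j : Fin (5 * n)} (h : (j : ℕ) = (i : ℕ) + 1) :
      RDAdj E s₁ t₁ s₂ t₂ n (.d2 i) (.d2 j)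
  | d2'step {i j : Fin (10 * n)} (h : (j : ℕ) = (i : ℕ) + 1) :
      RDAdj E s₁ t₁ s₂ t₂ n (.d2' i) (.d2' j)
  | d3step {i j : Fin (15 * n)} (h : (j : ℕ) = (i : ℕ) + 1) :
      RDAdj E s₁ t₁ s₂ t₂ n (.d3 i) (.d3 j)
  | d1ToS1 {i : Fin (10 * n)} (h : (i : ℕ) = 10 * n - 1) :
      RDAdj E s₁ t₁ s₂ t₂ n (.d1 i) (.orig s₁)
  | d2ToS2 {i : Fin (5 * n)} (h : (i : ℕ) = 5 * n - 1) :
      RDAdj E s₁ t₁ s₂ t₂ n (.d2 i) (.orig s₂)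
  | t1ToD1' {j : Fin (5 * n)} (h : (j : ℕ) = 0) :
      RDAdj E s₁ t₁ s₂ t₂ n (.orig t₁) (.d1' j)
  | t2ToD2' {j : Fin (10 * n)} (h : (j : ℕ) = 0) :
      RDAdj E s₁ t₁ s₂ t₂ n (.orig t₂) (.d2' j)
  | origToT3 {v : V} {i : Fin (15 * n)} (h : (i : ℕ) = 15 * n - 1) :
      RDAdj E s₁ t₁ s₂ t₂ n (.orig v) (.d3 i)

namespace RDaux

variable {V : Type} [DecidableEq V]

def nxt : List V → V → Option V
  | [], _ => none
  | [_], _ => none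
  | a :: b :: r, v => if v = a then some b else nxt (b :: r) v

lemma nxt_mem_src : ∀ (p : List V) (v w : V), nxt p v = some w → v ∈ p
  | [], _, _ => by simp [nxt]
  | [a], _, _ => by simp [nxt]
  | a :: b :: r, v, w => by
    simp only [nxt]
    split
    · intro _; simp_all
    · intro h; have := nxt_mem_src (b :: r) v w h; simp_all

lemma nxt_mem : ∀ (p : List V) (v w : V), nxt p v = some w → w ∈ p
  | [], _, _ => by simp [nxt]
  | [a], _, _ => by simp [nxt]
  | a :: b :: r, v, w => by
    simp only [nxt]
    split
    · intro h; injection h with h; simp [h]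
    · intro h; have := nxt_mem (b :: r) v w h; simp_all

lemma nxt_edge {E : V → V → Prop} :
    ∀ (p : List V) (v w : V), List.Chain' E p → nxt p v = some w → E v w
  | [], _, _ => by simp [nxt]
  | [a], _, _ => by simp [nxt]
  | a :: b :: r, v, w => by
    intro hc
    simp only [nxt]
    rw [List.Chain', List.isChain_cons_cons] at hc
    split
    · intro h; injection h with h; subst h; simp_all
    · exact nxt_edge (b :: r) v w hc.2

lemma nxt_total : ∀ (p : List V) (v t : V), v ∈ p → p.getLast? = some t → v ≠ t →
    ∃ w, nxt p v = some w
  | [], _, _ => by simp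
  | [a], v, t => by
    intro hv hl hne
    simp at hv hl
    exact absurd (hv.trans hl) hne
  | a :: b :: r, v, t => by
    intro hv hl hne
    simp only [nxt]
    split
    · exact ⟨b, rfl⟩
    · rename_i hva
      have hv' : v ∈ b :: r := by
        rcases List.mem_cons.1 hv with h | h
        · exact absurd h hva
        · exact h
      rw [List.getLast?_cons_cons] at hl
      exact nxt_total (b :: r) v t hv' hl hne

lemma nxt_indexOf : ∀ (p : List V) (v w : V), p.Nodup → nxt p v = some w →
    p.idxOf w = p.idxOf v + 1
  | [], _, _ => by simp [nxt]
  | [a], _, _ => by simp [nxt]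
  | a :: b :: r, v, w => by
    intro hnd
    simp only [nxt]
    split
    · rename_i hva
      intro hbw
      injection hbw with hbw
      subst hva
      rw [← hbw]
      have hvb : v ≠ b := by rintro rfl; simp at hnd
      rw [List.idxOf_cons_self, List.idxOf_cons_ne _ hvb, List.idxOf_cons_self]
    · rename_i hva
      intro h
      have hw : w ∈ b :: r := nxt_mem _ _ _ h
      have hwa : w ≠ a := by
        intro he; subst he
        exact (List.nodup_cons.1 hnd).1 hw
      have := nxt_indexOf (b :: r) v w (List.nodup_cons.1 hnd).2 h
      rw [List.idxOf_cons_ne _ (Ne.symm hwa), List.idxOf_cons_ne _ (Ne.symm hva), this]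

/-- The delegation function realizing the feasible solution. -/
def rdF (s₁ s₂ t₁ t₂ : V) (p₁ p₂ : List V) (n : ℕ) (hn : 0 < n) :
    RDVert V n → Option (RDVert V n)
  | .orig v =>
      if v = t₁ then some (.d1' ⟨0, by omega⟩)
      else if v = t₂ then some (.d2' ⟨0, by omega⟩)
      else
        match nxt p₁ v with
        | some w => some (.orig w)
        | none =>
          match nxt p₂ v with
          | some w => some (.orig w)
          | none => some (.d3 ⟨15 * n - 1, by omega⟩)
  | .d1 i => if h : (i : ℕ) + 1 < 10 * n then some (.d1 ⟨(i : ℕ) + 1, h⟩) else some (.orig s₁)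
  | .d1' i => if h : (i : ℕ) + 1 < 5 * n then some (.d1' ⟨(i : ℕ) + 1, h⟩) else none
  | .d2 i => if h : (i : ℕ) + 1 < 5 * n then some (.d2 ⟨(i : ℕ) + 1, h⟩) else some (.orig s₂)
  | .d2' i => if h : (i : ℕ) + 1 < 10 * n then some (.d2' ⟨(i : ℕ) + 1, h⟩) else none
  | .d3 i => if h : (i : ℕ) + 1 < 15 * n then some (.d3 ⟨(i : ℕ) + 1, h⟩) else none

/-- A rank function that strictly decreases along the delegation function. -/
def rrank (p₁ p₂ : List V) (n : ℕ) : RDVert V n → ℕ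
  | .orig v =>
      if v ∈ p₁ then 5 * n + (p₁.length - p₁.idxOf v)
      else if v ∈ p₂ then 10 * n + (p₂.length - p₂.idxOf v)
      else 1
  | .d1 i => 5 * n + p₁.length + 1 + (10 * n - 1 - (i : ℕ))
  | .d2 i => 10 * n + p₂.length + 1 + (5 * n - 1 - (i : ℕ))
  | .d1' i => 5 * n - 1 - (i : ℕ)
  | .d2' i => 10 * n - 1 - (i : ℕ)
  | .d3 i => 15 * n - 1 - (i : ℕ)

end RDaux

namespace RDaux

variable {V : Type} [DecidableEq V]
variable {E : V → V → Prop} {s₁ t₁ s₂ t₂ : V} {p₁ p₂ : List V} {n : ℕ} {hn : 0 < n}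

section Lemmas

variable (h1l : p₁.getLast? = some t₁) (h2l : p₂.getLast? = some t₂)
variable (h1nd : p₁.Nodup) (h2nd : p₂.Nodup)
variable (hs₁ : s₁ ∈ p₁) (hs₂ : s₂ ∈ p₂) (ht₁ : t₁ ∈ p₁) (ht₂ : t₂ ∈ p₂)
variable (hdisj : ∀ x ∈ p₁, x ∉ p₂)

include ht₁ ht₂ hdisj h1l h2l h1nd h2nd hs₁ hs₂ in
lemma rank_lt (u x : RDVert V n) (h : rdF s₁ s₂ t₁ t₂ p₁ p₂ n hn u = some x) :
    rrank p₁ p₂ n x < rrank p₁ p₂ n u := by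
  have hlt1 : ∀ v ∈ p₁, p₁.idxOf v < p₁.length := fun v hv => List.idxOf_lt_length_iff.2 hv
  have hlt2 : ∀ v ∈ p₂, p₂.idxOf v < p₂.length := fun v hv => List.idxOf_lt_length_iff.2 hv
  rcases u with v | i | i | i | i | i
  · simp only [rdF] at h
    split_ifs at h with hv1 hv2
    · injection h with h; subst h; subst hv1
      have := hlt1 _ ht₁
      simp only [rrank, if_pos ht₁]
      omega
    · injection h with h; subst h; subst hv2
      have := hlt2 _ ht₂
      have hnp1 := fun hc => hdisj _ hc ht₂
      simp only [rrank, if_neg hnp1, if_pos ht₂]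
      omega
    · rcases e1 : nxt p₁ v with _ | w
      · rcases e2 : nxt p₂ v with _ | w
        · simp only [e1, e2] at h
          injection h with h; subst h
          have hv1' : v ∉ p₁ := by
            intro hc
            obtain ⟨w, hw⟩ := nxt_total p₁ v t₁ hc h1l hv1
            simp [hw] at e1
          have hv2' : v ∉ p₂ := by
            intro hc
            obtain ⟨w, hw⟩ := nxt_total p₂ v t₂ hc h2l hv2
            simp [hw] at e2
          simp only [rrank, if_neg hv1', if_neg hv2']
          omega
        · simp only [e1, e2] at h
          injection h with h; subst h
          have hvm : v ∈ p₂ := nxt_mem_src _ _ _ e2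
          have hwm : w ∈ p₂ := nxt_mem _ _ _ e2
          have hvn : v ∉ p₁ := fun hc => hdisj _ hc hvm
          have hwn : w ∉ p₁ := fun hc => hdisj _ hc hwm
          have hidx := nxt_indexOf p₂ v w h2nd e2
          have := hlt2 _ hvm
          simp only [rrank, if_neg hvn, if_pos hvm, if_neg hwn, if_pos hwm, hidx]
          omega
      · simp only [e1] at h
        injection h with h; subst h
        have hvm : v ∈ p₁ := nxt_mem_src _ _ _ e1
        have hwm : w ∈ p₁ := nxt_mem _ _ _ e1
        have hidx := nxt_indexOf p₁ v w h1nd e1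
        have := hlt1 _ hvm
        simp only [rrank, if_pos hvm, if_pos hwm, hidx]
        omega
  · simp only [rdF] at h
    split_ifs at h with hi
    · injection h with h; subst h
      simp only [rrank]
      omega
    · injection h with h; subst h
      have := hlt1 _ hs₁
      simp only [rrank, if_pos hs₁]
      omega
  · simp only [rdF] at h
    split_ifs at h with hi
    · injection h with h; subst h
      have := i.isLt
      simp only [rrank]
      omega
  · simp only [rdF] at h
    split_ifs at h with hi
    · injection h with h; subst h
      simp only [rrank]
      omega
    · injection h with h; subst h
      have := hlt2 _ hs₂
      have hn1 : s₂ ∉ p₁ := fun hc => hdisj _ hc hs₂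
      simp only [rrank, if_neg hn1, if_pos hs₂]
      omega
  · simp only [rdF] at h
    split_ifs at h with hi
    · injection h with h; subst h
      have := i.isLt
      simp only [rrank]
      omega
  · simp only [rdF] at h
    split_ifs at h with hi
    · injection h with h; subst h
      have := i.isLt
      simp only [rrank]
      omega

end Lemmas

end RDaux

namespace RDaux

variable {V : Type} [DecidableEq V]
variable {E : V → V → Prop} {s₁ t₁ s₂ t₂ : V} {p₁ p₂ : List V} {n : ℕ} {hn : 0 < n}

include hn in
lemma rdF_subgraph (h1c : List.Chain' E p₁) (h2c : List.Chain' E p₂)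
    (u x : RDVert V n)
    (h : rdF s₁ s₂ t₁ t₂ p₁ p₂ n hn u = some x) :
    RDAdj E s₁ t₁ s₂ t₂ n u x := by
  rcases u with v | i | i | i | i | i
  · simp only [rdF] at h
    split_ifs at h with hv1 hv2
    · injection h with h; subst h; subst hv1
      exact RDAdj.t1ToD1' rfl
    · injection h with h; subst h; subst hv2
      exact RDAdj.t2ToD2' rfl
    · rcases e1 : nxt p₁ v with _ | w
      · rcases e2 : nxt p₂ v with _ | w
        · simp only [e1, e2] at h
          injection h with h; subst h
          exact RDAdj.origToT3 rfl
        · simp only [e1, e2] at h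
          injection h with h; subst h
          exact RDAdj.orig (nxt_edge _ _ _ h2c e2)
      · simp only [e1] at h
        injection h with h; subst h
        exact RDAdj.orig (nxt_edge _ _ _ h1c e1)
  · simp only [rdF] at h
    split_ifs at h with hi
    · injection h with h; subst h
      exact RDAdj.d1step rfl
    · injection h with h; subst h
      exact RDAdj.d1ToS1 (by have := i.isLt; omega)
  · simp only [rdF] at h
    split_ifs at h with hi
    injection h with h; subst h
    exact RDAdj.d1'step rfl
  · simp only [rdF] at h
    split_ifs at h with hi
    · injection h with h; subst h
      exact RDAdj.d2step rfl
    · injection h with h; subst h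
      exact RDAdj.d2ToS2 (by have := i.isLt; omega)
  · simp only [rdF] at h
    split_ifs at h with hi
    injection h with h; subst h
    exact RDAdj.d2'step rfl
  · simp only [rdF] at h
    split_ifs at h with hi
    injection h with h; subst h
    exact RDAdj.d3step rfl

include hn in
lemma rdF_none_sink (u : RDVert V n)
    (h : rdF s₁ s₂ t₁ t₂ p₁ p₂ n hn u = none) :
    IsSink (RDAdj E s₁ t₁ s₂ t₂ n) u := by
  rcases u with v | i | i | i | i | i <;> simp only [rdF] at h
  · split_ifs at h
    rcases e1 : nxt p₁ v with _ | w <;> rcases e2 : nxt p₂ v with _ | w <;>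
      simp [e1, e2] at h
  · split_ifs at h
  · split_ifs at h with hi
    intro y hy
    cases hy with
    | d1'step hj => rename_i j; have := j.isLt; have := i.isLt; omega
  · split_ifs at h
  · split_ifs at h with hi
    intro y hy
    cases hy with
    | d2'step hj => rename_i j; have := j.isLt; have := i.isLt; omega
  · split_ifs at h with hi
    intro y hy
    cases hy with
    | d3step hj => rename_i j; have := j.isLt; have := i.isLt; omega

include hn in
lemma sink_classify (t : RDVert V n)
    (h : IsSink (RDAdj E s₁ t₁ s₂ t₂ n) t) :
    (t = .d1' ⟨5 * n - 1, by omega⟩) ∨ (t = .d2' ⟨10 * n - 1, by omega⟩) ∨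
      (t = .d3 ⟨15 * n - 1, by omega⟩) := by
  rcases t with v | i | i | i | i | i
  · exact absurd (RDAdj.origToT3 (i := ⟨15 * n - 1, by omega⟩) rfl) (h _)
  · by_cases hi : (i : ℕ) + 1 < 10 * n
    · exact absurd (RDAdj.d1step (j := ⟨(i : ℕ) + 1, hi⟩) rfl) (h _)
    · exact absurd (RDAdj.d1ToS1 (by have := i.isLt; omega)) (h _)
  · by_cases hi : (i : ℕ) + 1 < 5 * n
    · exact absurd (RDAdj.d1'step (j := ⟨(i : ℕ) + 1, hi⟩) rfl) (h _)
    · left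
      have := i.isLt
      congr 1
      exact Fin.ext (show (i : ℕ) = 5 * n - 1 by omega)
  · by_cases hi : (i : ℕ) + 1 < 5 * n
    · exact absurd (RDAdj.d2step (j := ⟨(i : ℕ) + 1, hi⟩) rfl) (h _)
    · exact absurd (RDAdj.d2ToS2 (by have := i.isLt; omega)) (h _)
  · by_cases hi : (i : ℕ) + 1 < 10 * n
    · exact absurd (RDAdj.d2'step (j := ⟨(i : ℕ) + 1, hi⟩) rfl) (h _)
    · right; left
      have := i.isLt
      congr 1
      exact Fin.ext (show (i : ℕ) = 10 * n - 1 by omega)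
  · by_cases hi : (i : ℕ) + 1 < 15 * n
    · exact absurd (RDAdj.d3step (j := ⟨(i : ℕ) + 1, hi⟩) rfl) (h _)
    · right; right
      have := i.isLt
      congr 1
      exact Fin.ext (show (i : ℕ) = 15 * n - 1 by omega)

end RDaux

namespace RDaux

variable {V : Type} [DecidableEq V]
variable {s₁ t₁ s₂ t₂ : V} {p₁ p₂ : List V} {n : ℕ} {hn : 0 < n}

def S1set (p₁ : List V) (n : ℕ) : Set (RDVert V n) :=
  Set.range RDVert.d1 ∪ RDVert.orig '' {v | v ∈ p₁} ∪ Set.range RDVert.d1'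

def S2set (p₂ : List V) (n : ℕ) : Set (RDVert V n) :=
  Set.range RDVert.d2 ∪ RDVert.orig '' {v | v ∈ p₂} ∪ Set.range RDVert.d2'

def S3set (p₁ p₂ : List V) (n : ℕ) : Set (RDVert V n) :=
  RDVert.orig '' {v | v ∉ p₁ ∧ v ∉ p₂} ∪ Set.range RDVert.d3

@[simp] lemma orig_mem_S1 {v : V} : (.orig v : RDVert V n) ∈ S1set p₁ n ↔ v ∈ p₁ := by
  simp [S1set]
@[simp] lemma d1_mem_S1 {i} : (.d1 i : RDVert V n) ∈ S1set p₁ n := by simp [S1set]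
@[simp] lemma d1'_mem_S1 {i} : (.d1' i : RDVert V n) ∈ S1set p₁ n := by simp [S1set]
@[simp] lemma d2_mem_S1 {i} : (.d2 i : RDVert V n) ∉ S1set p₁ n := by simp [S1set]
@[simp] lemma d2'_mem_S1 {i} : (.d2' i : RDVert V n) ∉ S1set p₁ n := by simp [S1set]
@[simp] lemma d3_mem_S1 {i} : (.d3 i : RDVert V n) ∉ S1set p₁ n := by simp [S1set]

@[simp] lemma orig_mem_S2 {v : V} : (.orig v : RDVert V n) ∈ S2set p₂ n ↔ v ∈ p₂ := by
  simp [S2set]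
@[simp] lemma d2_mem_S2 {i} : (.d2 i : RDVert V n) ∈ S2set p₂ n := by simp [S2set]
@[simp] lemma d2'_mem_S2 {i} : (.d2' i : RDVert V n) ∈ S2set p₂ n := by simp [S2set]
@[simp] lemma d1_mem_S2 {i} : (.d1 i : RDVert V n) ∉ S2set p₂ n := by simp [S2set]
@[simp] lemma d1'_mem_S2 {i} : (.d1' i : RDVert V n) ∉ S2set p₂ n := by simp [S2set]
@[simp] lemma d3_mem_S2 {i} : (.d3 i : RDVert V n) ∉ S2set p₂ n := by simp [S2set]

@[simp] lemma orig_mem_S3 {v : V} :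
    (.orig v : RDVert V n) ∈ S3set p₁ p₂ n ↔ (v ∉ p₁ ∧ v ∉ p₂) := by simp [S3set]
@[simp] lemma d3_mem_S3 {i} : (.d3 i : RDVert V n) ∈ S3set p₁ p₂ n := by simp [S3set]
@[simp] lemma d1_mem_S3 {i} : (.d1 i : RDVert V n) ∉ S3set p₁ p₂ n := by simp [S3set]
@[simp] lemma d1'_mem_S3 {i} : (.d1' i : RDVert V n) ∉ S3set p₁ p₂ n := by simp [S3set]
@[simp] lemma d2_mem_S3 {i} : (.d2 i : RDVert V n) ∉ S3set p₁ p₂ n := by simp [S3set]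
@[simp] lemma d2'_mem_S3 {i} : (.d2' i : RDVert V n) ∉ S3set p₁ p₂ n := by simp [S3set]

include hn in
lemma closed1 (ht₁ : t₁ ∈ p₁) (hs₂' : s₂ ∉ p₁) (hdisj' : ∀ x ∈ p₂, x ∉ p₁)
    (u x : RDVert V n) (hu : u ∉ S1set p₁ n)
    (h : rdF s₁ s₂ t₁ t₂ p₁ p₂ n hn u = some x) : x ∉ S1set p₁ n := by
  rcases u with v | i | i | i | i | i
  · have hv1 : v ∉ p₁ := by simpa using hu
    simp only [rdF] at h
    split_ifs at h with hv'1 hv'2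
    · exact absurd (hv'1 ▸ ht₁) hv1
    · injection h with h; subst h; simp
    · rcases e1 : nxt p₁ v with _ | w
      · rcases e2 : nxt p₂ v with _ | w
        · simp only [e1, e2] at h; injection h with h; subst h; simp
        · simp only [e1, e2] at h; injection h with h; subst h
          simpa using hdisj' w (nxt_mem _ _ _ e2)
      · exact absurd (nxt_mem_src _ _ _ e1) hv1
  · exact absurd d1_mem_S1 hu
  · exact absurd d1'_mem_S1 hu
  · simp only [rdF] at h
    split_ifs at h with hi
    · injection h with h; subst h; simp
    · injection h with h; subst h; simpa using hs₂'
  · simp only [rdF] at h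
    split_ifs at h with hi
    injection h with h; subst h; simp
  · simp only [rdF] at h
    split_ifs at h with hi
    injection h with h; subst h; simp

include hn in
lemma closed2 (ht₂ : t₂ ∈ p₂) (hs₁' : s₁ ∉ p₂) (hdisj : ∀ x ∈ p₁, x ∉ p₂)
    (u x : RDVert V n) (hu : u ∉ S2set p₂ n)
    (h : rdF s₁ s₂ t₁ t₂ p₁ p₂ n hn u = some x) : x ∉ S2set p₂ n := by
  rcases u with v | i | i | i | i | i
  · have hv2 : v ∉ p₂ := by simpa using hu
    simp only [rdF] at h
    split_ifs at h with hv'1 hv'2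
    · injection h with h; subst h; simp
    · exact absurd (hv'2 ▸ ht₂) hv2
    · rcases e1 : nxt p₁ v with _ | w
      · rcases e2 : nxt p₂ v with _ | w
        · simp only [e1, e2] at h; injection h with h; subst h; simp
        · exact absurd (nxt_mem_src _ _ _ e2) hv2
      · simp only [e1] at h; injection h with h; subst h
        simpa using hdisj w (nxt_mem _ _ _ e1)
  · simp only [rdF] at h
    split_ifs at h with hi
    · injection h with h; subst h; simp
    · injection h with h; subst h; simpa using hs₁'
  · simp only [rdF] at h
    split_ifs at h with hi
    injection h with h; subst h; simp
  · exact absurd d2_mem_S2 hu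
  · exact absurd d2'_mem_S2 hu
  · simp only [rdF] at h
    split_ifs at h with hi
    injection h with h; subst h; simp

include hn in
lemma closed3 (h1l : p₁.getLast? = some t₁) (h2l : p₂.getLast? = some t₂)
    (hs₁ : s₁ ∈ p₁) (hs₂ : s₂ ∈ p₂)
    (u x : RDVert V n) (hu : u ∉ S3set p₁ p₂ n)
    (h : rdF s₁ s₂ t₁ t₂ p₁ p₂ n hn u = some x) : x ∉ S3set p₁ p₂ n := by
  rcases u with v | i | i | i | i | i
  · have hv : v ∈ p₁ ∨ v ∈ p₂ := by
      by_contra hc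
      push_neg at hc
      exact hu (by simpa using hc)
    simp only [rdF] at h
    split_ifs at h with hv'1 hv'2
    · injection h with h; subst h; simp
    · injection h with h; subst h; simp
    · rcases e1 : nxt p₁ v with _ | w
      · rcases e2 : nxt p₂ v with _ | w
        · exfalso
          rcases hv with hv | hv
          · obtain ⟨w, hw⟩ := nxt_total p₁ v t₁ hv h1l hv'1
            simp [hw] at e1
          · obtain ⟨w, hw⟩ := nxt_total p₂ v t₂ hv h2l hv'2
            simp [hw] at e2
        · simp only [e1, e2] at h; injection h with h; subst h
          have := nxt_mem _ _ _ e2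
          simp only [orig_mem_S3]
          tauto
      · simp only [e1] at h; injection h with h; subst h
        have := nxt_mem _ _ _ e1
        simp only [orig_mem_S3]
        tauto
  · simp only [rdF] at h
    split_ifs at h with hi
    · injection h with h; subst h; simp
    · injection h with h; subst h
      simp only [orig_mem_S3]
      tauto
  · simp only [rdF] at h
    split_ifs at h with hi
    injection h with h; subst h; simp
  · simp only [rdF] at h
    split_ifs at h with hi
    · injection h with h; subst h; simp
    · injection h with h; subst h
      simp only [orig_mem_S3]
      tauto
  · simp only [rdF] at h
    split_ifs at h with hi
    injection h with h; subst h; simp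
  · exact absurd d3_mem_S3 hu

lemma reach_subset {α : Type*} (H : α → α → Prop) (S : Set α) (t : α) (ht : t ∈ S)
    (hcl : ∀ u ∉ S, ∀ x, H u x → x ∉ S) :
    {v | Relation.ReflTransGen H v t} ⊆ S := by
  intro v hv
  by_contra hvS
  have key : ∀ a b, Relation.ReflTransGen H a b → a ∉ S → b ∉ S := by
    intro a b hab
    induction hab with
    | refl => exact id
    | tail h1 h2 ih => intro ha; exact hcl _ (ih ha) _ h2
  exact key v t hv hvS ht

lemma ncard_range_inj {α β : Type*} [Fintype α] {f : α → β} (hf : Function.Injective f) :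
    (Set.range f).ncard = Fintype.card α := by
  rw [← Nat.card_coe_set_eq, Nat.card_range_of_injective hf, Nat.card_eq_fintype_card]

lemma ncard_orig_image_le [Fintype V] (s : Set V) (n : ℕ) :
    ((RDVert.orig : V → RDVert V n) '' s).ncard ≤ Fintype.card V := by
  calc ((RDVert.orig : V → RDVert V n) '' s).ncard ≤ s.ncard := Set.ncard_image_le s.toFinite
    _ ≤ (Set.univ : Set V).ncard := Set.ncard_le_ncard (Set.subset_univ s) Set.finite_univ
    _ = Fintype.card V := by rw [Set.ncard_univ, Nat.card_eq_fintype_card]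

lemma d1_inj : Function.Injective (RDVert.d1 : Fin (10 * n) → RDVert V n) :=
  fun a b h => by injection h
lemma d1'_inj : Function.Injective (RDVert.d1' : Fin (5 * n) → RDVert V n) :=
  fun a b h => by injection h
lemma d2_inj : Function.Injective (RDVert.d2 : Fin (5 * n) → RDVert V n) :=
  fun a b h => by injection h
lemma d2'_inj : Function.Injective (RDVert.d2' : Fin (10 * n) → RDVert V n) :=
  fun a b h => by injection h
lemma d3_inj : Function.Injective (RDVert.d3 : Fin (15 * n) → RDVert V n) :=
  fun a b h => by injection h

lemma ncard_S1 [Fintype V] (hcard : Fintype.card V = n) :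
    (S1set p₁ n : Set (RDVert V n)).ncard ≤ 16 * n := by
  have h1 := Set.ncard_union_le
    (Set.range (RDVert.d1 : Fin (10 * n) → RDVert V n) ∪
      RDVert.orig '' {v | v ∈ p₁}) (Set.range (RDVert.d1' : Fin (5 * n) → RDVert V n))
  have h2 := Set.ncard_union_le (Set.range (RDVert.d1 : Fin (10 * n) → RDVert V n))
    (RDVert.orig '' {v : V | v ∈ p₁})
  have e1 : (Set.range (RDVert.d1 : Fin (10 * n) → RDVert V n)).ncard = 10 * n := by
    rw [ncard_range_inj d1_inj, Fintype.card_fin]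
  have e2 : (Set.range (RDVert.d1' : Fin (5 * n) → RDVert V n)).ncard = 5 * n := by
    rw [ncard_range_inj d1'_inj, Fintype.card_fin]
  have e3 := ncard_orig_image_le (V := V) {v | v ∈ p₁} n
  rw [hcard] at e3
  simp only [S1set]
  omega

lemma ncard_S2 [Fintype V] (hcard : Fintype.card V = n) :
    (S2set p₂ n : Set (RDVert V n)).ncard ≤ 16 * n := by
  have h1 := Set.ncard_union_le
    (Set.range (RDVert.d2 : Fin (5 * n) → RDVert V n) ∪
      RDVert.orig '' {v | v ∈ p₂}) (Set.range (RDVert.d2' : Fin (10 * n) → RDVert V n))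
  have h2 := Set.ncard_union_le (Set.range (RDVert.d2 : Fin (5 * n) → RDVert V n))
    (RDVert.orig '' {v : V | v ∈ p₂})
  have e1 : (Set.range (RDVert.d2 : Fin (5 * n) → RDVert V n)).ncard = 5 * n := by
    rw [ncard_range_inj d2_inj, Fintype.card_fin]
  have e2 : (Set.range (RDVert.d2' : Fin (10 * n) → RDVert V n)).ncard = 10 * n := by
    rw [ncard_range_inj d2'_inj, Fintype.card_fin]
  have e3 := ncard_orig_image_le (V := V) {v | v ∈ p₂} n
  rw [hcard] at e3
  simp only [S2set]
  omega

lemma ncard_S3 [Fintype V] (hcard : Fintype.card V = n) :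
    (S3set p₁ p₂ n : Set (RDVert V n)).ncard ≤ 16 * n := by
  have h1 := Set.ncard_union_le (RDVert.orig '' {v : V | v ∉ p₁ ∧ v ∉ p₂})
    (Set.range (RDVert.d3 : Fin (15 * n) → RDVert V n))
  have e1 : (Set.range (RDVert.d3 : Fin (15 * n) → RDVert V n)).ncard = 15 * n := by
    rw [ncard_range_inj d3_inj, Fintype.card_fin]
  have e3 := ncard_orig_image_le (V := V) {v | v ∉ p₁ ∧ v ∉ p₂} n
  rw [hcard] at e3
  simp only [S3set]
  omega

end RDaux

/-- if `G` contains two vertex-disjoint directed paths, one from `s₁` to `t₁`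
and one from `s₂` to `t₂`, then `(G', 17n)` is a yes-instance of Resolve Delegation. -/
theorem stmt_0 {V : Type} [Fintype V] [DecidableEq V]
    (E : V → V → Prop) (hloop : ∀ v, ¬ E v v)
    (s₁ t₁ s₂ t₂ : V)
    (hdist : s₁ ≠ t₁ ∧ s₁ ≠ s₂ ∧ s₁ ≠ t₂ ∧ t₁ ≠ s₂ ∧ t₁ ≠ t₂ ∧ s₂ ≠ t₂)
    (n : ℕ) (hn : n = Fintype.card V)
    (p₁ p₂ : List V)
    (hp₁ : IsPath E s₁ t₁ p₁) (hp₂ : IsPath E s₂ t₂ p₂)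
    (hdisj : ∀ x ∈ p₁, x ∉ p₂) :
    YesInstance (RDAdj E s₁ t₁ s₂ t₂ n) (17 * n) := by
  obtain ⟨h1ne, h1h, h1l, h1c, h1nd⟩ := hp₁
  obtain ⟨h2ne, h2h, h2l, h2c, h2nd⟩ := hp₂
  have hne : Nonempty V := ⟨s₁⟩
  have hn0 : 0 < n := hn ▸ Fintype.card_pos
  have hcard : Fintype.card V = n := hn.symm
  have hs1 : s₁ ∈ p₁ := List.mem_of_mem_head? (by simp [h1h])
  have ht1 : t₁ ∈ p₁ := List.mem_of_mem_getLast? (by simp [h1l])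
  have hs2 : s₂ ∈ p₂ := List.mem_of_mem_head? (by simp [h2h])
  have ht2 : t₂ ∈ p₂ := List.mem_of_mem_getLast? (by simp [h2l])
  have hdisj' : ∀ x ∈ p₂, x ∉ p₁ := fun x hx hc => hdisj x hc hx
  refine ⟨fun a b => RDaux.rdF s₁ s₂ t₁ t₂ p₁ p₂ n hn0 a = some b, ?_, ?_, ?_, ?_⟩
  · intro u v h
    exact RDaux.rdF_subgraph h1c h2c u v h
  · intro v hv
    have key : ∀ a b : RDVert V n,
        Relation.TransGen (fun a b => RDaux.rdF s₁ s₂ t₁ t₂ p₁ p₂ n hn0 a = some b) a b →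
        RDaux.rrank p₁ p₂ n b < RDaux.rrank p₁ p₂ n a := by
      intro a b h
      induction h with
      | single h =>
        exact RDaux.rank_lt h1l h2l h1nd h2nd hs1 hs2 ht1 ht2 hdisj _ _ h
      | tail h1 h2 ih =>
        exact lt_trans (RDaux.rank_lt h1l h2l h1nd h2nd hs1 hs2 ht1 ht2 hdisj _ _ h2) ih
    exact absurd (key v v hv) (lt_irrefl _)
  · intro v hv
    rcases hf : RDaux.rdF s₁ s₂ t₁ t₂ p₁ p₂ n hn0 v with _ | w
    · exact absurd (RDaux.rdF_none_sink (E := E) v hf) hv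
    · have he : {u | RDaux.rdF s₁ s₂ t₁ t₂ p₁ p₂ n hn0 v = some u} = {w} := by
        ext u
        simp [hf, eq_comm]
      rw [he, Set.ncard_singleton]
  · intro t hts
    rcases RDaux.sink_classify (E := E) (hn := hn0) t hts with h | h | h <;> rw [h]
    · have hsub := RDaux.reach_subset
        (fun a b => RDaux.rdF s₁ s₂ t₁ t₂ p₁ p₂ n hn0 a = some b)
        (RDaux.S1set p₁ n) (RDVert.d1' ⟨5 * n - 1, by omega⟩) RDaux.d1'_mem_S1
        (fun u hu x hx => RDaux.closed1 ht1 (fun hc => hdisj _ hc hs2) hdisj' u x hu hx)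
      calc {v | Relation.ReflTransGen _ v _}.ncard
          ≤ (RDaux.S1set p₁ n).ncard := Set.ncard_le_ncard hsub (Set.toFinite _)
        _ ≤ 16 * n := RDaux.ncard_S1 hcard
        _ ≤ 17 * n := by omega
    · have hsub := RDaux.reach_subset
        (fun a b => RDaux.rdF s₁ s₂ t₁ t₂ p₁ p₂ n hn0 a = some b)
        (RDaux.S2set p₂ n) (RDVert.d2' ⟨10 * n - 1, by omega⟩) RDaux.d2'_mem_S2
        (fun u hu x hx => RDaux.closed2 ht2 (fun hc => hdisj _ hs1 hc) hdisj u x hu hx)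
      calc {v | Relation.ReflTransGen _ v _}.ncard
          ≤ (RDaux.S2set p₂ n).ncard := Set.ncard_le_ncard hsub (Set.toFinite _)
        _ ≤ 16 * n := RDaux.ncard_S2 hcard
        _ ≤ 17 * n := by omega
    · have hsub := RDaux.reach_subset
        (fun a b => RDaux.rdF s₁ s₂ t₁ t₂ p₁ p₂ n hn0 a = some b)
        (RDaux.S3set p₁ p₂ n) (RDVert.d3 ⟨15 * n - 1, by omega⟩) RDaux.d3_mem_S3
        (fun u hu x hx => RDaux.closed3 h1l h2l hs1 hs2 u x hu hx)
      calc {v | Relation.ReflTransGen _ v _}.ncard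
          ≤ (RDaux.S3set p₁ p₂ n).ncard := Set.ncard_le_ncard hsub (Set.toFinite _)
        _ ≤ 16 * n := RDaux.ncard_S3 hcard
        _ ≤ 17 * n := by omega
end

section
/- Let G=(V,E) be a finite directed graph on n vertices containing four pairwise distinct vertices s1, t1, s2, t2, and let G' be the delegation graph constructed from (G, s1, t1, s2, t2) as described. If (G', 17n) is a yes-instance of Resolve Delegation, then G contains two vertex-disjoint directed paths, one from s1 to t1 and one from s2 to t2. -/
namespace RDProof
set_option linter.unusedSectionVars false

open Relation

variable {V : Type} [Fintype V] [DecidableEq V] {E : V → V → Prop} {s₁ t₁ s₂ t₂ : V} {n : ℕ}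
  {H : RDVert V n → RDVert V n → Prop} {lam : ℕ}

lemma exists_succ_of_not_sink (hF : FeasibleSolution (RDAdj E s₁ t₁ s₂ t₂ n) H lam)
    {v : RDVert V n} (hv : ¬ IsSink (RDAdj E s₁ t₁ s₂ t₂ n) v) : ∃ u, H v u := by
  obtain ⟨a, ha⟩ := Set.ncard_eq_one.mp (hF.2.2.1 v hv)
  refine ⟨a, ?_⟩
  have : a ∈ {u | H v u} := by rw [ha]; rfl
  exact this

lemma succ_unique (hF : FeasibleSolution (RDAdj E s₁ t₁ s₂ t₂ n) H lam)
    {v a b : RDVert V n} (ha : H v a) (hb : H v b) : a = b := by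
  have hv : ¬ IsSink (RDAdj E s₁ t₁ s₂ t₂ n) v := fun hs => hs a (hF.1 v a ha)
  obtain ⟨c, hc⟩ := Set.ncard_eq_one.mp (hF.2.2.1 v hv)
  have h1 : a ∈ ({c} : Set (RDVert V n)) := hc ▸ ha
  have h2 : b ∈ ({c} : Set (RDVert V n)) := hc ▸ hb
  simp only [Set.mem_singleton_iff] at h1 h2
  rw [h1, h2]

lemma reach_unique (hF : FeasibleSolution (RDAdj E s₁ t₁ s₂ t₂ n) H lam)
    {t t' : RDVert V n} (ht : IsSink (RDAdj E s₁ t₁ s₂ t₂ n) t)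
    (ht' : IsSink (RDAdj E s₁ t₁ s₂ t₂ n) t') {v : RDVert V n}
    (h1 : ReflTransGen H v t) (h2 : ReflTransGen H v t') : t = t' := by
  revert h2
  induction h1 using Relation.ReflTransGen.head_induction_on with
  | refl =>
    intro h2
    rcases h2.cases_head with rfl | ⟨u, hu, _⟩
    · rfl
    · exact absurd (hF.1 _ _ hu) (ht u)
  | head h' htail ih =>
    intro h2
    rcases h2.cases_head with rfl | ⟨u, hu, h2'⟩
    · exact absurd (hF.1 _ _ h') (ht' _)
    · exact ih (succ_unique hF hu h' ▸ h2')

lemma reach_sink (hF : FeasibleSolution (RDAdj E s₁ t₁ s₂ t₂ n) H lam) (v : RDVert V n) :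
    ∃ t, IsSink (RDAdj E s₁ t₁ s₂ t₂ n) t ∧ ReflTransGen H v t := by
  have itr : IsTrans (RDVert V n) (fun a b => Relation.TransGen H b a) :=
    ⟨fun a b c h1 h2 => h2.trans h1⟩
  have iir : IsIrrefl (RDVert V n) (fun a b => Relation.TransGen H b a) :=
    ⟨fun a h => hF.2.1 a h⟩
  have hwf : WellFounded (fun a b : RDVert V n => Relation.TransGen H b a) :=
    Finite.wellFounded_of_trans_of_irrefl _
  refine hwf.induction (C := fun v => ∃ t, IsSink (RDAdj E s₁ t₁ s₂ t₂ n) t ∧ ReflTransGen H v t) v ?_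
  intro x ih
  by_cases hx : IsSink (RDAdj E s₁ t₁ s₂ t₂ n) x
  · exact ⟨x, hx, .refl⟩
  · obtain ⟨u, hu⟩ := exists_succ_of_not_sink hF hx
    obtain ⟨t, ht, hr⟩ := ih u (Relation.TransGen.single hu)
    exact ⟨t, ht, hr.head hu⟩

lemma forced (hF : FeasibleSolution (RDAdj E s₁ t₁ s₂ t₂ n) H lam) {v w : RDVert V n}
    (hvw : RDAdj E s₁ t₁ s₂ t₂ n v w)
    (huniq : ∀ u, RDAdj E s₁ t₁ s₂ t₂ n v u → u = w) : H v w := by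
  obtain ⟨u, hu⟩ := exists_succ_of_not_sink hF (fun hs => hs w hvw)
  exact huniq u (hF.1 _ _ hu) ▸ hu

/-! ### forced steps within the path gadgets -/

lemma step_d1' (hF : FeasibleSolution (RDAdj E s₁ t₁ s₂ t₂ n) H lam)
    {i : Fin (5*n)} (hk : (i:ℕ)+1 < 5*n) : H (.d1' i) (.d1' ⟨(i:ℕ)+1, hk⟩) := by
  refine forced hF (.d1'step rfl) ?_
  intro u hu
  cases hu with
  | d1'step h => exact congrArg RDVert.d1' (Fin.ext h)

lemma step_d2' (hF : FeasibleSolution (RDAdj E s₁ t₁ s₂ t₂ n) H lam)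
    {i : Fin (10*n)} (hk : (i:ℕ)+1 < 10*n) : H (.d2' i) (.d2' ⟨(i:ℕ)+1, hk⟩) := by
  refine forced hF (.d2'step rfl) ?_
  intro u hu
  cases hu with
  | d2'step h => exact congrArg RDVert.d2' (Fin.ext h)

lemma step_d3 (hF : FeasibleSolution (RDAdj E s₁ t₁ s₂ t₂ n) H lam)
    {i : Fin (15*n)} (hk : (i:ℕ)+1 < 15*n) : H (.d3 i) (.d3 ⟨(i:ℕ)+1, hk⟩) := by
  refine forced hF (.d3step rfl) ?_
  intro u hu
  cases hu with
  | d3step h => exact congrArg RDVert.d3 (Fin.ext h)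

lemma step_d1 (hF : FeasibleSolution (RDAdj E s₁ t₁ s₂ t₂ n) H lam)
    {i : Fin (10*n)} (hk : (i:ℕ)+1 < 10*n) : H (.d1 i) (.d1 ⟨(i:ℕ)+1, hk⟩) := by
  refine forced hF (.d1step rfl) ?_
  intro u hu
  cases hu with
  | d1step h => exact congrArg RDVert.d1 (Fin.ext h)
  | d1ToS1 h => omega

lemma step_d2 (hF : FeasibleSolution (RDAdj E s₁ t₁ s₂ t₂ n) H lam)
    {i : Fin (5*n)} (hk : (i:ℕ)+1 < 5*n) : H (.d2 i) (.d2 ⟨(i:ℕ)+1, hk⟩) := by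
  refine forced hF (.d2step rfl) ?_
  intro u hu
  cases hu with
  | d2step h => exact congrArg RDVert.d2 (Fin.ext h)
  | d2ToS2 h => omega

lemma step_d1_last (hF : FeasibleSolution (RDAdj E s₁ t₁ s₂ t₂ n) H lam)
    {i : Fin (10*n)} (hi : (i:ℕ) = 10*n-1) : H (.d1 i) (.orig s₁) := by
  refine forced hF (.d1ToS1 hi) ?_
  intro u hu
  cases hu with
  | d1step h => have := (by omega : False); exact this.elim
  | d1ToS1 h => rfl

lemma step_d2_last (hF : FeasibleSolution (RDAdj E s₁ t₁ s₂ t₂ n) H lam)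
    {i : Fin (5*n)} (hi : (i:ℕ) = 5*n-1) : H (.d2 i) (.orig s₂) := by
  refine forced hF (.d2ToS2 hi) ?_
  intro u hu
  cases hu with
  | d2step h => have := (by omega : False); exact this.elim
  | d2ToS2 h => rfl

/-! ### reachability along the forced gadget paths -/

lemma d1'_reaches (hF : FeasibleSolution (RDAdj E s₁ t₁ s₂ t₂ n) H lam)
    {j : Fin (5*n)} (hj : (j:ℕ) = 5*n-1) (i : Fin (5*n)) :
    ReflTransGen H (.d1' i) (.d1' j) := by
  suffices h : ∀ m : ℕ, ∀ i : Fin (5*n), 5*n - 1 - (i:ℕ) ≤ m → ReflTransGen H (.d1' i) (.d1' j) by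
    exact h (5*n) i (by omega)
  intro m
  induction m with
  | zero =>
    intro i hi
    have hv : i = j := Fin.ext (by have := i.isLt; omega)
    rw [hv]
  | succ m ih =>
    intro i hi
    by_cases hc : (i:ℕ) = 5*n - 1
    · have hv : i = j := Fin.ext (by omega)
      rw [hv]
    · have hk : (i:ℕ)+1 < 5*n := by have := i.isLt; omega
      exact (ih ⟨(i:ℕ)+1, hk⟩ (by show 5*n-1-((i:ℕ)+1) ≤ m; omega)).head (step_d1' hF hk)

lemma d2'_reaches (hF : FeasibleSolution (RDAdj E s₁ t₁ s₂ t₂ n) H lam)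
    {j : Fin (10*n)} (hj : (j:ℕ) = 10*n-1) (i : Fin (10*n)) :
    ReflTransGen H (.d2' i) (.d2' j) := by
  suffices h : ∀ m : ℕ, ∀ i : Fin (10*n), 10*n - 1 - (i:ℕ) ≤ m → ReflTransGen H (.d2' i) (.d2' j) by
    exact h (10*n) i (by omega)
  intro m
  induction m with
  | zero =>
    intro i hi
    have hv : i = j := Fin.ext (by have := i.isLt; omega)
    rw [hv]
  | succ m ih =>
    intro i hi
    by_cases hc : (i:ℕ) = 10*n - 1
    · have hv : i = j := Fin.ext (by omega)
      rw [hv]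
    · have hk : (i:ℕ)+1 < 10*n := by have := i.isLt; omega
      exact (ih ⟨(i:ℕ)+1, hk⟩ (by show 10*n-1-((i:ℕ)+1) ≤ m; omega)).head (step_d2' hF hk)

lemma d3_reaches (hF : FeasibleSolution (RDAdj E s₁ t₁ s₂ t₂ n) H lam)
    {j : Fin (15*n)} (hj : (j:ℕ) = 15*n-1) (i : Fin (15*n)) :
    ReflTransGen H (.d3 i) (.d3 j) := by
  suffices h : ∀ m : ℕ, ∀ i : Fin (15*n), 15*n - 1 - (i:ℕ) ≤ m → ReflTransGen H (.d3 i) (.d3 j) by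
    exact h (15*n) i (by omega)
  intro m
  induction m with
  | zero =>
    intro i hi
    have hv : i = j := Fin.ext (by have := i.isLt; omega)
    rw [hv]
  | succ m ih =>
    intro i hi
    by_cases hc : (i:ℕ) = 15*n - 1
    · have hv : i = j := Fin.ext (by omega)
      rw [hv]
    · have hk : (i:ℕ)+1 < 15*n := by have := i.isLt; omega
      exact (ih ⟨(i:ℕ)+1, hk⟩ (by show 15*n-1-((i:ℕ)+1) ≤ m; omega)).head (step_d3 hF hk)

lemma d1_reaches (hF : FeasibleSolution (RDAdj E s₁ t₁ s₂ t₂ n) H lam)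
    (i : Fin (10*n)) : ReflTransGen H (.d1 i) (.orig s₁) := by
  suffices h : ∀ m : ℕ, ∀ i : Fin (10*n), 10*n - 1 - (i:ℕ) ≤ m → ReflTransGen H (.d1 i) (.orig s₁) by
    exact h (10*n) i (by omega)
  intro m
  induction m with
  | zero =>
    intro i hi
    have hc : (i:ℕ) = 10*n-1 := by have := i.isLt; omega
    exact ReflTransGen.single (step_d1_last hF hc)
  | succ m ih =>
    intro i hi
    by_cases hc : (i:ℕ) = 10*n - 1
    · exact ReflTransGen.single (step_d1_last hF hc)
    · have hk : (i:ℕ)+1 < 10*n := by have := i.isLt; omega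
      exact (ih ⟨(i:ℕ)+1, hk⟩ (by show 10*n-1-((i:ℕ)+1) ≤ m; omega)).head (step_d1 hF hk)

lemma d2_reaches (hF : FeasibleSolution (RDAdj E s₁ t₁ s₂ t₂ n) H lam)
    (i : Fin (5*n)) : ReflTransGen H (.d2 i) (.orig s₂) := by
  suffices h : ∀ m : ℕ, ∀ i : Fin (5*n), 5*n - 1 - (i:ℕ) ≤ m → ReflTransGen H (.d2 i) (.orig s₂) by
    exact h (5*n) i (by omega)
  intro m
  induction m with
  | zero =>
    intro i hi
    have hc : (i:ℕ) = 5*n-1 := by have := i.isLt; omega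
    exact ReflTransGen.single (step_d2_last hF hc)
  | succ m ih =>
    intro i hi
    by_cases hc : (i:ℕ) = 5*n - 1
    · exact ReflTransGen.single (step_d2_last hF hc)
    · have hk : (i:ℕ)+1 < 5*n := by have := i.isLt; omega
      exact (ih ⟨(i:ℕ)+1, hk⟩ (by show 5*n-1-((i:ℕ)+1) ≤ m; omega)).head (step_d2 hF hk)

/-! ### sinks -/

lemma isSink_d1' {j : Fin (5*n)} (hj : (j:ℕ) = 5*n-1) :
    IsSink (RDAdj E s₁ t₁ s₂ t₂ n) (.d1' j) := by
  intro u hu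
  cases hu with
  | d1'step h => rename_i j'; have := j'.isLt; omega

lemma isSink_d2' {j : Fin (10*n)} (hj : (j:ℕ) = 10*n-1) :
    IsSink (RDAdj E s₁ t₁ s₂ t₂ n) (.d2' j) := by
  intro u hu
  cases hu with
  | d2'step h => rename_i j'; have := j'.isLt; omega

lemma isSink_d3 {j : Fin (15*n)} (hj : (j:ℕ) = 15*n-1) :
    IsSink (RDAdj E s₁ t₁ s₂ t₂ n) (.d3 j) := by
  intro u hu
  cases hu with
  | d3step h => rename_i j'; have := j'.isLt; omega

lemma sink_cases (hn : 0 < n) {t : RDVert V n} (ht : IsSink (RDAdj E s₁ t₁ s₂ t₂ n) t) :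
    (∃ j : Fin (5*n), (j:ℕ) = 5*n-1 ∧ t = .d1' j) ∨
    (∃ j : Fin (10*n), (j:ℕ) = 10*n-1 ∧ t = .d2' j) ∨
    (∃ j : Fin (15*n), (j:ℕ) = 15*n-1 ∧ t = .d3 j) := by
  cases t with
  | orig v => exact (ht _ (RDAdj.origToT3 (i := ⟨15*n-1, by omega⟩) rfl)).elim
  | d1 i =>
    by_cases hc : (i:ℕ) = 10*n-1
    · exact (ht _ (RDAdj.d1ToS1 hc)).elim
    · exact (ht _ (RDAdj.d1step (j := ⟨(i:ℕ)+1, by have := i.isLt; omega⟩) rfl)).elim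
  | d1' i =>
    by_cases hc : (i:ℕ) = 5*n-1
    · exact Or.inl ⟨i, hc, rfl⟩
    · exact (ht _ (RDAdj.d1'step (j := ⟨(i:ℕ)+1, by have := i.isLt; omega⟩) rfl)).elim
  | d2 i =>
    by_cases hc : (i:ℕ) = 5*n-1
    · exact (ht _ (RDAdj.d2ToS2 hc)).elim
    · exact (ht _ (RDAdj.d2step (j := ⟨(i:ℕ)+1, by have := i.isLt; omega⟩) rfl)).elim
  | d2' i =>
    by_cases hc : (i:ℕ) = 10*n-1
    · exact Or.inr (Or.inl ⟨i, hc, rfl⟩)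
    · exact (ht _ (RDAdj.d2'step (j := ⟨(i:ℕ)+1, by have := i.isLt; omega⟩) rfl)).elim
  | d3 i =>
    by_cases hc : (i:ℕ) = 15*n-1
    · exact Or.inr (Or.inr ⟨i, hc, rfl⟩)
    · exact (ht _ (RDAdj.d3step (j := ⟨(i:ℕ)+1, by have := i.isLt; omega⟩) rfl)).elim

/-! ### counting -/

lemma ncard_range {k : ℕ} (f : Fin k → RDVert V n) (hf : Function.Injective f) :
    (Set.range f).ncard = k := by
  rw [← Set.image_univ, Set.ncard_image_of_injective _ hf, Set.ncard_univ,
    Nat.card_eq_fintype_card, Fintype.card_fin]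

lemma card_bound (hF : FeasibleSolution (RDAdj E s₁ t₁ s₂ t₂ n) H lam)
    {t : RDVert V n} (ht : IsSink (RDAdj E s₁ t₁ s₂ t₂ n) t)
    {A : Set (RDVert V n)} (hA : A ⊆ {v | Relation.ReflTransGen H v t}) : A.ncard ≤ lam :=
  le_trans (Set.ncard_le_ncard hA (Set.toFinite _)) (hF.2.2.2 t ht)

/-! ### extracting the original-graph paths -/

lemma extract_path_1 (hF : FeasibleSolution (RDAdj E s₁ t₁ s₂ t₂ n) H lam)
    {j1 : Fin (5*n)} (hj1 : (j1:ℕ) = 5*n-1)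
    {a : RDVert V n} (h : ReflTransGen H a (.d1' j1)) :
    ∀ v : V, a = .orig v →
      ∃ p : List V, p ≠ [] ∧ p.head? = some v ∧ p.getLast? = some t₁ ∧
        List.Chain' E p ∧ p.Nodup ∧
        (∀ x ∈ p, ReflTransGen H (.orig v) (.orig x)) ∧
        (∀ x ∈ p, ReflTransGen H (.orig x) (.d1' j1)) := by
  induction h using Relation.ReflTransGen.head_induction_on with
  | refl =>
    intro v hv
    exact absurd hv (by simp)
  | head h' htail ih =>
    intro v hv
    subst hv
    have hE := hF.1 _ _ h'
    cases hE with
    | orig hEuv =>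
      rename_i u
      obtain ⟨p', hne', hh', hl', hch', hnd', hinv1', hinv2'⟩ := ih u rfl
      refine ⟨v :: p', by simp, rfl, ?_, ?_, ?_, ?_, ?_⟩
      · cases p' with
        | nil => exact absurd rfl hne'
        | cons b l => rw [List.getLast?_cons_cons]; exact hl'
      · refine List.isChain_cons.mpr ⟨?_, hch'⟩
        intro b hb
        rw [hh'] at hb
        simp only [Option.mem_def, Option.some_inj] at hb
        rw [hb] at hEuv; exact hEuv
      · refine List.nodup_cons.mpr ⟨?_, hnd'⟩
        intro hvmem
        exact hF.2.1 _ (Relation.TransGen.head' h' (hinv1' v hvmem))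
      · intro x hx
        rcases List.mem_cons.mp hx with rfl | hx'
        · exact .refl
        · exact (hinv1' x hx').head h'
      · intro x hx
        rcases List.mem_cons.mp hx with rfl | hx'
        · exact htail.head h'
        · exact hinv2' x hx'
    | t1ToD1' hj0 =>
      refine ⟨[t₁], by simp, rfl, rfl, List.isChain_singleton t₁, List.nodup_singleton t₁, ?_, ?_⟩
      · intro x hx; simp only [List.mem_singleton] at hx; rw [hx]
      · intro x hx; simp only [List.mem_singleton] at hx; rw [hx]
        exact htail.head h'
    | t2ToD2' hj0 =>
      rename_i j
      have hforced : ReflTransGen H (.d2' j) (.d2' ⟨10*n-1, by have := j.isLt; omega⟩) :=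
        d2'_reaches hF rfl j
      have heq := reach_unique hF (isSink_d1' hj1)
        (isSink_d2' (j := ⟨10*n-1, by have := j.isLt; omega⟩) rfl) htail hforced
      exact absurd heq (by simp)
    | origToT3 hi =>
      rename_i i
      have heq := reach_unique hF (isSink_d3 hi) (isSink_d1' hj1) ReflTransGen.refl htail
      exact absurd heq (by simp)

lemma extract_path_2 (hF : FeasibleSolution (RDAdj E s₁ t₁ s₂ t₂ n) H lam)
    {j2 : Fin (10*n)} (hj2 : (j2:ℕ) = 10*n-1)
    {a : RDVert V n} (h : ReflTransGen H a (.d2' j2)) :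
    ∀ v : V, a = .orig v →
      ∃ p : List V, p ≠ [] ∧ p.head? = some v ∧ p.getLast? = some t₂ ∧
        List.Chain' E p ∧ p.Nodup ∧
        (∀ x ∈ p, ReflTransGen H (.orig v) (.orig x)) ∧
        (∀ x ∈ p, ReflTransGen H (.orig x) (.d2' j2)) := by
  induction h using Relation.ReflTransGen.head_induction_on with
  | refl =>
    intro v hv
    exact absurd hv (by simp)
  | head h' htail ih =>
    intro v hv
    subst hv
    have hE := hF.1 _ _ h'
    cases hE with
    | orig hEuv =>
      rename_i u
      obtain ⟨p', hne', hh', hl', hch', hnd', hinv1', hinv2'⟩ := ih u rfl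
      refine ⟨v :: p', by simp, rfl, ?_, ?_, ?_, ?_, ?_⟩
      · cases p' with
        | nil => exact absurd rfl hne'
        | cons b l => rw [List.getLast?_cons_cons]; exact hl'
      · refine List.isChain_cons.mpr ⟨?_, hch'⟩
        intro b hb
        rw [hh'] at hb
        simp only [Option.mem_def, Option.some_inj] at hb
        rw [hb] at hEuv; exact hEuv
      · refine List.nodup_cons.mpr ⟨?_, hnd'⟩
        intro hvmem
        exact hF.2.1 _ (Relation.TransGen.head' h' (hinv1' v hvmem))
      · intro x hx
        rcases List.mem_cons.mp hx with rfl | hx'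
        · exact .refl
        · exact (hinv1' x hx').head h'
      · intro x hx
        rcases List.mem_cons.mp hx with rfl | hx'
        · exact htail.head h'
        · exact hinv2' x hx'
    | t2ToD2' hj0 =>
      refine ⟨[t₂], by simp, rfl, rfl, List.isChain_singleton t₂, List.nodup_singleton t₂, ?_, ?_⟩
      · intro x hx; simp only [List.mem_singleton] at hx; rw [hx]
      · intro x hx; simp only [List.mem_singleton] at hx; rw [hx]
        exact htail.head h'
    | t1ToD1' hj0 =>
      rename_i j
      have hforced : ReflTransGen H (.d1' j) (.d1' ⟨5*n-1, by have := j.isLt; omega⟩) :=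
        d1'_reaches hF rfl j
      have heq := reach_unique hF (isSink_d2' hj2)
        (isSink_d1' (j := ⟨5*n-1, by have := j.isLt; omega⟩) rfl) htail hforced
      exact absurd heq (by simp)
    | origToT3 hi =>
      rename_i i
      have heq := reach_unique hF (isSink_d3 hi) (isSink_d2' hj2) ReflTransGen.refl htail
      exact absurd heq (by simp)

end RDProof

/-- if `(G', 17n)` is a yes-instance of Resolve Delegation, then `G` contains
two vertex-disjoint directed paths, one from `s₁` to `t₁` and one from `s₂` to `t₂`. -/

theorem stmt_1 {V : Type} [Fintype V] [DecidableEq V]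
    (E : V → V → Prop) (hloop : ∀ v, ¬ E v v)
    (s₁ t₁ s₂ t₂ : V)
    (hdist : s₁ ≠ t₁ ∧ s₁ ≠ s₂ ∧ s₁ ≠ t₂ ∧ t₁ ≠ s₂ ∧ t₁ ≠ t₂ ∧ s₂ ≠ t₂)
    (n : ℕ) (hn : n = Fintype.card V)
    (hyes : YesInstance (RDAdj E s₁ t₁ s₂ t₂ n) (17 * n)) :
    ∃ p₁ p₂ : List V,
      IsPath E s₁ t₁ p₁ ∧ IsPath E s₂ t₂ p₂ ∧ ∀ x ∈ p₁, x ∉ p₂ := by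
  classical
  obtain ⟨H, hF⟩ := hyes
  have hn0 : 0 < n := by
    rw [hn]; exact Fintype.card_pos_iff.mpr ⟨s₁⟩
  have hinj1 : Function.Injective (RDVert.d1 : Fin (10*n) → RDVert V n) :=
    fun a b h => by injection h
  have hinj1' : Function.Injective (RDVert.d1' : Fin (5*n) → RDVert V n) :=
    fun a b h => by injection h
  have hinj2 : Function.Injective (RDVert.d2 : Fin (5*n) → RDVert V n) :=
    fun a b h => by injection h
  have hinj2' : Function.Injective (RDVert.d2' : Fin (10*n) → RDVert V n) :=
    fun a b h => by injection h
  have hinj3 : Function.Injective (RDVert.d3 : Fin (15*n) → RDVert V n) :=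
    fun a b h => by injection h
  -- the sink reached from `orig s₁` must be `t1'`
  have hs1 : ∃ j : Fin (5*n), (j:ℕ) = 5*n-1 ∧
      Relation.ReflTransGen H (.orig s₁) (.d1' j) := by
    obtain ⟨ta, hta, hra⟩ := RDProof.reach_sink hF (.orig s₁)
    rcases RDProof.sink_cases hn0 hta with ⟨j, hj, rfl⟩ | ⟨j, hj, rfl⟩ | ⟨j, hj, rfl⟩
    · exact ⟨j, hj, hra⟩
    · exfalso
      have hsub : (Set.range (RDVert.d2' : Fin (10*n) → RDVert V n) ∪
          Set.range (RDVert.d1 : Fin (10*n) → RDVert V n)) ⊆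
          {v | Relation.ReflTransGen H v (.d2' j)} := by
        rintro x (⟨i, rfl⟩ | ⟨i, rfl⟩)
        · exact RDProof.d2'_reaches hF hj i
        · exact (RDProof.d1_reaches hF i).trans hra
      have hcard := RDProof.card_bound hF hta hsub
      rw [Set.ncard_union_eq (Set.disjoint_left.mpr (by
            rintro x ⟨i, rfl⟩ ⟨i', h⟩; exact nomatch h))
          (Set.toFinite _) (Set.toFinite _),
        RDProof.ncard_range _ hinj2', RDProof.ncard_range _ hinj1] at hcard
      omega
    · exfalso
      have hsub : (Set.range (RDVert.d3 : Fin (15*n) → RDVert V n) ∪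
          Set.range (RDVert.d1 : Fin (10*n) → RDVert V n)) ⊆
          {v | Relation.ReflTransGen H v (.d3 j)} := by
        rintro x (⟨i, rfl⟩ | ⟨i, rfl⟩)
        · exact RDProof.d3_reaches hF hj i
        · exact (RDProof.d1_reaches hF i).trans hra
      have hcard := RDProof.card_bound hF hta hsub
      rw [Set.ncard_union_eq (Set.disjoint_left.mpr (by
            rintro x ⟨i, rfl⟩ ⟨i', h⟩; exact nomatch h))
          (Set.toFinite _) (Set.toFinite _),
        RDProof.ncard_range _ hinj3, RDProof.ncard_range _ hinj1] at hcard
      omega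
  obtain ⟨j1, hj1, hs1r⟩ := hs1
  -- the sink reached from `orig s₂` must be `t2'`
  have hs2 : ∃ j : Fin (10*n), (j:ℕ) = 10*n-1 ∧
      Relation.ReflTransGen H (.orig s₂) (.d2' j) := by
    obtain ⟨tb, htb, hrb⟩ := RDProof.reach_sink hF (.orig s₂)
    rcases RDProof.sink_cases hn0 htb with ⟨j, hj, rfl⟩ | ⟨j, hj, rfl⟩ | ⟨j, hj, rfl⟩
    · exfalso
      have hjj : j = j1 := Fin.ext (by omega)
      subst hjj
      have hsub : ((Set.range (RDVert.d1' : Fin (5*n) → RDVert V n) ∪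
          Set.range (RDVert.d1 : Fin (10*n) → RDVert V n)) ∪
          Set.range (RDVert.d2 : Fin (5*n) → RDVert V n)) ⊆
          {v | Relation.ReflTransGen H v (.d1' j)} := by
        rintro x ((⟨i, rfl⟩ | ⟨i, rfl⟩) | ⟨i, rfl⟩)
        · exact RDProof.d1'_reaches hF hj i
        · exact (RDProof.d1_reaches hF i).trans hs1r
        · exact (RDProof.d2_reaches hF i).trans hrb
      have hcard := RDProof.card_bound hF htb hsub
      rw [Set.ncard_union_eq (Set.disjoint_union_left.mpr
            ⟨Set.disjoint_left.mpr (by rintro x ⟨i, rfl⟩ ⟨i', h⟩; exact nomatch h),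
             Set.disjoint_left.mpr (by rintro x ⟨i, rfl⟩ ⟨i', h⟩; exact nomatch h)⟩)
          (Set.toFinite _) (Set.toFinite _),
        Set.ncard_union_eq (Set.disjoint_left.mpr (by
            rintro x ⟨i, rfl⟩ ⟨i', h⟩; exact nomatch h))
          (Set.toFinite _) (Set.toFinite _),
        RDProof.ncard_range _ hinj1', RDProof.ncard_range _ hinj1,
        RDProof.ncard_range _ hinj2] at hcard
      omega
    · exact ⟨j, hj, hrb⟩
    · exfalso
      have hsub : (Set.range (RDVert.d3 : Fin (15*n) → RDVert V n) ∪
          Set.range (RDVert.d2 : Fin (5*n) → RDVert V n)) ⊆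
          {v | Relation.ReflTransGen H v (.d3 j)} := by
        rintro x (⟨i, rfl⟩ | ⟨i, rfl⟩)
        · exact RDProof.d3_reaches hF hj i
        · exact (RDProof.d2_reaches hF i).trans hrb
      have hcard := RDProof.card_bound hF htb hsub
      rw [Set.ncard_union_eq (Set.disjoint_left.mpr (by
            rintro x ⟨i, rfl⟩ ⟨i', h⟩; exact nomatch h))
          (Set.toFinite _) (Set.toFinite _),
        RDProof.ncard_range _ hinj3, RDProof.ncard_range _ hinj2] at hcard
      omega
  obtain ⟨j2, hj2, hs2r⟩ := hs2
  obtain ⟨p₁, hne1, hh1, hl1, hch1, hnd1, _, hA1⟩ :=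
    RDProof.extract_path_1 hF hj1 hs1r s₁ rfl
  obtain ⟨p₂, hne2, hh2, hl2, hch2, hnd2, _, hA2⟩ :=
    RDProof.extract_path_2 hF hj2 hs2r s₂ rfl
  refine ⟨p₁, p₂, ⟨hne1, hh1, hl1, hch1, hnd1⟩, ⟨hne2, hh2, hl2, hch2, hnd2⟩, ?_⟩
  intro x hx1 hx2
  have heq := RDProof.reach_unique hF (RDProof.isSink_d1' hj1) (RDProof.isSink_d2' hj2)
    (hA1 x hx1) (hA2 x hx2)
  exact nomatch heq
end

section
/- Let φ be a (3,B2)-SAT instance with variables x_1,…,x_n and clauses C_1,…,C_m, and let G be the delegation graph constructed from φ as described. If φ has a satisfying Boolean assignment, then (G, 3) is a yes-instance of Resolve Delegation. -/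
/-- Vertex set of the delegation graph constructed from a (3,B2)-SAT instance with
`n` variables and `m` clauses: vertices `a_i, ā_i, d_{i,1}, d_{i,2}` for each variable
and `y_j` for each clause. -/
inductive SatVert (n m : ℕ) : Type
  | pos : Fin n → SatVert n m   -- a_i   (the literal  x_i)
  | neg : Fin n → SatVert n m   -- ā_i   (the literal ¬x_i)
  | d1  : Fin n → SatVert n m   -- d_{i,1}
  | d2  : Fin n → SatVert n m   -- d_{i,2}
  | y   : Fin m → SatVert n m   -- y_j
  deriving DecidableEq, Fintype

/-- The map `f` sending a literal (variable index together with its polarity) to the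
corresponding literal vertex: `f(x_i) = a_i` and `f(¬x_i) = ā_i`. -/
def litVert {n m : ℕ} : Fin n × Bool → SatVert n m
  | (i, true) => .pos i
  | (i, false) => .neg i

/-- Edge relation of the delegation graph constructed from the (3,B2)-SAT instance with
clauses `C : Fin m → Fin 3 → Fin n × Bool` (clause `j` consists of the three literals
`C j 0, C j 1, C j 2`): edges `(y_j, f(l))` for every literal `l` of clause `C_j`, and
edges `(d_{i,2}, d_{i,1})`, `(d_{i,1}, a_i)`, `(d_{i,1}, ā_i)` for every variable. -/
inductive SatAdj {n m : ℕ} (C : Fin m → Fin 3 → Fin n × Bool) :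
    SatVert n m → SatVert n m → Prop
  | clause (j : Fin m) (k : Fin 3) : SatAdj C (.y j) (litVert (C j k))
  | dd (i : Fin n) : SatAdj C (.d2 i) (.d1 i)
  | dpos (i : Fin n) : SatAdj C (.d1 i) (.pos i)
  | dneg (i : Fin n) : SatAdj C (.d1 i) (.neg i)

/-- The (3,B2) side condition: every literal (each variable with each polarity) appears
in exactly 2 clause positions. -/
def IsB2 {n m : ℕ} (C : Fin m → Fin 3 → Fin n × Bool) : Prop :=
  ∀ (i : Fin n) (b : Bool),
    (Finset.univ.filter (fun p : Fin m × Fin 3 => C p.1 p.2 = (i, b))).card = 2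


section Aux

variable {n m : ℕ}

/-- Rank function used to show acyclicity of the chosen solution. -/
def satRk : SatVert n m → ℕ
  | .pos _ => 0
  | .neg _ => 0
  | .d1 _ => 1
  | .y _ => 1
  | .d2 _ => 2

/-- The successor function defining the feasible solution: each clause vertex points to
its chosen (satisfied) literal, each `d1` points to the false literal, `d2` points to `d1`. -/
def satNxt (C : Fin m → Fin 3 → Fin n × Bool) (g : Fin n → Bool)
    (ch : Fin m → Fin 3) : SatVert n m → Option (SatVert n m)
  | .pos _ => none
  | .neg _ => none
  | .d1 i => some (litVert (i, !g i))
  | .d2 i => some (.d1 i)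
  | .y j => some (litVert (C j (ch j)))

lemma litVert_eq_iff {p q : Fin n × Bool} :
    (litVert p : SatVert n m) = litVert q ↔ p = q := by
  obtain ⟨i, b⟩ := p; obtain ⟨i', b'⟩ := q
  cases b <;> cases b' <;> simp [litVert, Prod.ext_iff]

lemma litVert_ne_y {p : Fin n × Bool} {j : Fin m} : (litVert p : SatVert n m) ≠ .y j := by
  obtain ⟨i, b⟩ := p; cases b <;> simp [litVert]

lemma litVert_ne_d1 {p : Fin n × Bool} {i : Fin n} : (litVert p : SatVert n m) ≠ .d1 i := by
  obtain ⟨i', b⟩ := p; cases b <;> simp [litVert]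

lemma litVert_ne_d2 {p : Fin n × Bool} {i : Fin n} : (litVert p : SatVert n m) ≠ .d2 i := by
  obtain ⟨i', b⟩ := p; cases b <;> simp [litVert]

lemma satRk_litVert (p : Fin n × Bool) : satRk (litVert p : SatVert n m) = 0 := by
  obtain ⟨i, b⟩ := p; cases b <;> simp [litVert, satRk]

lemma satNxt_rk {C : Fin m → Fin 3 → Fin n × Bool} {g : Fin n → Bool}
    {ch : Fin m → Fin 3} {u v : SatVert n m} (h : satNxt C g ch u = some v) :
    satRk v < satRk u := by
  cases u with
  | pos i => simp [satNxt] at h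
  | neg i => simp [satNxt] at h
  | d1 i =>
      simp only [satNxt, Option.some.injEq] at h
      subst h; rw [satRk_litVert]; simp [satRk]
  | d2 i =>
      simp only [satNxt, Option.some.injEq] at h
      subst h; simp [satRk]
  | y j =>
      simp only [satNxt, Option.some.injEq] at h
      subst h; rw [satRk_litVert]; simp [satRk]

lemma satNxt_litVert (C : Fin m → Fin 3 → Fin n × Bool) (g : Fin n → Bool)
    (ch : Fin m → Fin 3) (p : Fin n × Bool) : satNxt C g ch (litVert p) = none := by
  obtain ⟨i, b⟩ := p; cases b <;> simp [litVert, satNxt]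

lemma rtg_litVert {C : Fin m → Fin 3 → Fin n × Bool} {g : Fin n → Bool}
    {ch : Fin m → Fin 3} {p : Fin n × Bool} {t : SatVert n m}
    (h : Relation.ReflTransGen (fun u v => satNxt C g ch u = some v) (litVert p) t) :
    (litVert p : SatVert n m) = t := by
  rcases h.cases_head with h | ⟨c, hstep, _⟩
  · exact h
  · rw [satNxt_litVert] at hstep; simp at hstep

/-- Classification of vertices that can reach the literal vertex `litVert (i, b)`
in the solution graph. -/
lemma satReach_classify {C : Fin m → Fin 3 → Fin n × Bool} {g : Fin n → Bool}
    {ch : Fin m → Fin 3} {v : SatVert n m} {i : Fin n} {b : Bool}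
    (h : Relation.ReflTransGen (fun u v => satNxt C g ch u = some v) v (litVert (i, b))) :
    v = litVert (i, b) ∨ (∃ j, v = .y j ∧ C j (ch j) = (i, b)) ∨
      ((v = .d1 i ∨ v = .d2 i) ∧ (!g i) = b) := by
  rcases h.cases_head with h | ⟨c, hstep, hc⟩
  · exact Or.inl h
  · cases v with
    | pos i' => simp [satNxt] at hstep
    | neg i' => simp [satNxt] at hstep
    | y j =>
        simp only [satNxt, Option.some.injEq] at hstep
        subst hstep
        exact Or.inr (Or.inl ⟨j, rfl, litVert_eq_iff.mp (rtg_litVert hc)⟩)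
    | d1 i' =>
        simp only [satNxt, Option.some.injEq] at hstep
        subst hstep
        have h2 := litVert_eq_iff.mp (rtg_litVert hc)
        have hi : i' = i := congrArg Prod.fst h2
        have hb : (!g i') = b := congrArg Prod.snd h2
        subst hi
        exact Or.inr (Or.inr ⟨Or.inl rfl, hb⟩)
    | d2 i' =>
        simp only [satNxt, Option.some.injEq] at hstep
        subst hstep
        rcases hc.cases_head with h1 | ⟨c2, hstep2, hc2⟩
        · exact absurd h1.symm litVert_ne_d1
        · simp only [satNxt, Option.some.injEq] at hstep2
          subst hstep2
          have h2 := litVert_eq_iff.mp (rtg_litVert hc2)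
          have hi : i' = i := congrArg Prod.fst h2
          have hb : (!g i') = b := congrArg Prod.snd h2
          subst hi
          exact Or.inr (Or.inr ⟨Or.inr rfl, hb⟩)

/-- The key counting bound: at most 3 vertices reach any literal vertex. -/
lemma satReach_count {C : Fin m → Fin 3 → Fin n × Bool} {g : Fin n → Bool}
    {ch : Fin m → Fin 3} (hB2 : IsB2 C)
    (hch : ∀ j, g (C j (ch j)).1 = (C j (ch j)).2) (i : Fin n) (b : Bool) :
    Set.ncard {v : SatVert n m |
      Relation.ReflTransGen (fun u v => satNxt C g ch u = some v) v (litVert (i, b))} ≤ 3 := by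
  classical
  by_cases hb : b = g i
  · -- true literal: reach set is {t} plus at most 2 clause vertices
    set Jf : Finset (Fin m) := Finset.univ.filter (fun j => C j (ch j) = (i, b)) with hJf
    have hJcard : Jf.card ≤ 2 := by
      have := hB2 i b
      rw [← this]
      apply Finset.card_le_card_of_injOn (fun j => (j, ch j))
      · intro j hj
        simp only [hJf, Finset.mem_coe, Finset.mem_filter, Finset.mem_univ, true_and] at hj ⊢
        exact hj
      · intro j _ j' _ hjj'
        exact congrArg Prod.fst hjj'
    have hsub : {v : SatVert n m |
        Relation.ReflTransGen (fun u v => satNxt C g ch u = some v) v (litVert (i, b))} ⊆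
        ↑(insert (litVert (i, b)) (Jf.image SatVert.y)) := by
      intro v hv
      rcases satReach_classify hv with h1 | ⟨j, hj, hcj⟩ | ⟨_, hgi⟩
      · simp [h1]
      · subst hj
        simp only [Finset.coe_insert, Set.mem_insert_iff, Finset.coe_image, Set.mem_image,
          Finset.mem_coe]
        exact Or.inr ⟨j, by simp [hJf, hcj], rfl⟩
      · subst hb; simp at hgi
    calc Set.ncard _ ≤ (insert (litVert (i, b) : SatVert n m) (Jf.image SatVert.y)).card := by
          rw [← Set.ncard_coe_finset]
          exact Set.ncard_le_ncard hsub (Finset.finite_toSet _)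
      _ ≤ (Jf.image SatVert.y).card + 1 := Finset.card_insert_le _ _
      _ ≤ Jf.card + 1 := by
          have := Finset.card_image_le (f := (SatVert.y : Fin m → SatVert n m)) (s := Jf); omega
      _ ≤ 3 := by omega
  · -- false literal: reach set is {t, d1 i, d2 i}
    have hsub : {v : SatVert n m |
        Relation.ReflTransGen (fun u v => satNxt C g ch u = some v) v (litVert (i, b))} ⊆
        ↑({litVert (i, b), .d1 i, .d2 i} : Finset (SatVert n m)) := by
      intro v hv
      rcases satReach_classify hv with h1 | ⟨j, hj, hcj⟩ | ⟨h3, _⟩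
      · simp [h1]
      · exfalso
        have := hch j
        rw [hcj] at this
        exact hb this.symm
      · rcases h3 with h | h <;> simp [h]
    calc Set.ncard _ ≤ ({litVert (i, b), .d1 i, .d2 i} : Finset (SatVert n m)).card := by
          rw [← Set.ncard_coe_finset]
          exact Set.ncard_le_ncard hsub (Finset.finite_toSet _)
      _ ≤ 3 := by
          apply le_trans (Finset.card_insert_le _ _)
          have h2 : ({SatVert.d1 i, SatVert.d2 i} : Finset (SatVert n m)).card ≤ 2 := by
            apply le_trans (Finset.card_insert_le _ _)
            simp
          omega

end Aux

/-- if the (3,B2)-SAT instance has a satisfying assignment, then `(G, 3)` is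
a yes-instance of Resolve Delegation (an assignment `g` satisfies clause `j` iff some
literal `C j k` of the clause evaluates to true, i.e. `g (C j k).1 = (C j k).2`). -/
theorem stmt_2 {n m : ℕ} (C : Fin m → Fin 3 → Fin n × Bool)
    (hB2 : IsB2 C)
    (g : Fin n → Bool) (hg : ∀ j : Fin m, ∃ k : Fin 3, g (C j k).1 = (C j k).2) :
    YesInstance (SatAdj C) 3 :=  by
  classical
  set ch : Fin m → Fin 3 := fun j => (hg j).choose with hchdef
  have hch : ∀ j, g (C j (ch j)).1 = (C j (ch j)).2 := fun j => (hg j).choose_spec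
  refine ⟨fun u v => satNxt C g ch u = some v, ?_, ?_, ?_, ?_⟩
  · -- subgraph
    intro u v h
    cases u with
    | pos i => simp [satNxt] at h
    | neg i => simp [satNxt] at h
    | d1 i =>
        simp only [satNxt, Option.some.injEq] at h
        subst h
        cases hgi : g i <;> simp [litVert, hgi]
        · exact SatAdj.dpos i
        · exact SatAdj.dneg i
    | d2 i =>
        simp only [satNxt, Option.some.injEq] at h
        subst h
        exact SatAdj.dd i
    | y j =>
        simp only [satNxt, Option.some.injEq] at h
        subst h
        exact SatAdj.clause j (ch j)
  · -- acyclic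
    intro v hv
    have : ∀ a b : SatVert n m,
        Relation.TransGen (fun u v => satNxt C g ch u = some v) a b → satRk b < satRk a := by
      intro a b h
      induction h with
      | single h => exact satNxt_rk h
      | tail _ h ih => exact lt_trans (satNxt_rk h) ih
    exact absurd (this v v hv) (lt_irrefl _)
  · -- out-degree 1
    intro v hv
    cases v with
    | pos i =>
        exact absurd (fun u h => by cases h) hv
    | neg i =>
        exact absurd (fun u h => by cases h) hv
    | d1 i =>
        have : {u : SatVert n m | satNxt C g ch (.d1 i) = some u} = {litVert (i, !g i)} := by
          ext u; simp [satNxt, eq_comm]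
        rw [this, Set.ncard_singleton]
    | d2 i =>
        have : {u : SatVert n m | satNxt C g ch (.d2 i) = some u} = {SatVert.d1 i} := by
          ext u; simp [satNxt, eq_comm]
        rw [this, Set.ncard_singleton]
    | y j =>
        have : {u : SatVert n m | satNxt C g ch (.y j) = some u} = {litVert (C j (ch j))} := by
          ext u; simp [satNxt, eq_comm]
        rw [this, Set.ncard_singleton]
  · -- reach bound
    intro t ht
    cases t with
    | pos i =>
        have := satReach_count (g := g) hB2 hch i true
        simpa [litVert] using this
    | neg i =>
        have := satReach_count (g := g) hB2 hch i false
        simpa [litVert] using this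
    | d1 i => exact absurd (SatAdj.dpos i) (ht _)
    | d2 i => exact absurd (SatAdj.dd i) (ht _)
    | y j => exact absurd (SatAdj.clause j 0) (ht _)
end

section
/- Let φ be a (3,B2)-SAT instance with variables x_1,…,x_n and clauses C_1,…,C_m, and let G be the delegation graph constructed from φ as described. If (G, 3) is a yes-instance of Resolve Delegation, then φ has a satisfying Boolean assignment. -/
/-- if `(G, 3)` is a yes-instance of Resolve Delegation, then the
(3,B2)-SAT instance has a satisfying assignment. -/
theorem stmt_3 {n m : ℕ} (C : Fin m → Fin 3 → Fin n × Bool)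
    (hB2 : IsB2 C)
    (hyes : YesInstance (SatAdj C) 3) :
    ∃ g : Fin n → Bool, ∀ j : Fin m, ∃ k : Fin 3, g (C j k).1 = (C j k).2 := by
  classical
  obtain ⟨H, hsub, hacyc, hout, hcap⟩ := hyes
  have houtn : ∀ v, ¬ IsSink (SatAdj C) v → ∃ u, H v u ∧ ∀ w, H v w → w = u := by
    intro v hv
    obtain ⟨u, hu⟩ := Set.ncard_eq_one.mp (hout v hv)
    rw [Set.eq_singleton_iff_unique_mem] at hu
    exact ⟨u, hu.1, hu.2⟩
  have hd2 : ∀ i : Fin n, H (.d2 i) (.d1 i) := by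
    intro i
    obtain ⟨u, hu, _⟩ := houtn (.d2 i) (fun h => h _ (SatAdj.dd i))
    have he := hsub _ _ hu
    cases he
    exact hu
  have hd1 : ∀ i : Fin n, (H (.d1 i) (.pos i) ∧ ¬ H (.d1 i) (.neg i)) ∨
      (H (.d1 i) (.neg i) ∧ ¬ H (.d1 i) (.pos i)) := by
    intro i
    obtain ⟨u, hu, huniq⟩ := houtn (.d1 i) (fun h => h _ (SatAdj.dpos i))
    have he := hsub _ _ hu
    cases he with
    | dpos => exact Or.inl ⟨hu, fun h => by have := huniq _ h; simp at this⟩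
    | dneg => exact Or.inr ⟨hu, fun h => by have := huniq _ h; simp at this⟩
  have four : ∀ (t A B D : SatVert n m), IsSink (SatAdj C) t →
      A ≠ B → A ≠ D → A ≠ t → B ≠ D → B ≠ t → D ≠ t →
      Relation.ReflTransGen H A t → Relation.ReflTransGen H B t →
      Relation.ReflTransGen H D t → False := by
    intro t A B D ht hAB hAD hAt hBD hBt hDt hA hB hD
    have hsubS : ({A, B, D, t} : Finset (SatVert n m)) ⊆
        {v | Relation.ReflTransGen H v t}.toFinset := by
      intro x hx
      simp only [Finset.mem_insert, Finset.mem_singleton] at hx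
      rcases hx with rfl|rfl|rfl|rfl <;>
        simp [hA, hB, hD, Set.mem_toFinset, Relation.ReflTransGen.refl]
    have hcard : ({A, B, D, t} : Finset (SatVert n m)).card = 4 := by
      rw [Finset.card_insert_of_notMem (by simp [hAB, hAD, hAt]),
        Finset.card_insert_of_notMem (by simp [hBD, hBt]),
        Finset.card_insert_of_notMem (by simp [hDt]), Finset.card_singleton]
    have h3 := hcap t ht
    rw [Set.ncard_eq_toFinset_card'] at h3
    have hle := Finset.card_le_card hsubS
    omega
  have hsinkpos : ∀ i : Fin n, IsSink (SatAdj C) (.pos i) := by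
    intro i u h; cases h
  have hsinkneg : ∀ i : Fin n, IsSink (SatAdj C) (.neg i) := by
    intro i u h; cases h
  refine ⟨fun i => if H (.d1 i) (.neg i) then true else false, fun j => ?_⟩
  obtain ⟨u, hu, _⟩ := houtn (.y j) (fun h => h _ (SatAdj.clause j 0))
  have he := hsub _ _ hu
  cases he with
  | clause _ k =>
    refine ⟨k, ?_⟩
    rcases hCk : C j k with ⟨i, b⟩
    rw [hCk] at hu
    cases b with
    | true =>
      -- u = pos i, y_j → pos i; show H (d1 i) (neg i)
      simp only [litVert] at hu
      simp only []
      rw [if_pos]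
      rcases hd1 i with ⟨hp, hn⟩ | ⟨hn, hp⟩
      · exact (four (.pos i) (.y j) (.d1 i) (.d2 i) (hsinkpos i)
            (by simp) (by simp) (by simp) (by simp) (by simp) (by simp)
            (Relation.ReflTransGen.single hu)
            (Relation.ReflTransGen.single hp)
            ((Relation.ReflTransGen.single (hd2 i)).trans
              (Relation.ReflTransGen.single hp))).elim
      · exact hn
    | false =>
      simp only [litVert] at hu
      simp only []
      rw [if_neg]
      intro hn
      exact four (.neg i) (.y j) (.d1 i) (.d2 i) (hsinkneg i)
        (by simp) (by simp) (by simp) (by simp) (by simp) (by simp)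
        (Relation.ReflTransGen.single hu)
        (Relation.ReflTransGen.single hn)
        ((Relation.ReflTransGen.single (hd2 i)).trans
          (Relation.ReflTransGen.single hn))
end

section
/- Let G=(V,E) be a finite undirected graph with edge weights w : E → ℕ≥1, let r be a positive integer, and let H be the delegation graph constructed from (G, w) as described. If there exists an orientation Λ of G such that the weighted out-degree of every vertex of G under Λ is at most r, then (H, r+1) is a yes-instance of Resolve Delegation. -/
/-- Vertex set of the delegation graph `H` constructed from the undirected graph `G`
with edge weights `w`: the sink vertices `b_u` for `u ∈ V(G)` (the left summand)
together with, for each edge `e` of `G`, the path vertices `a_{e,1}, …, a_{e,w(e)}`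
(`a_{e,k}` is represented by the `Fin (w e)` element with value `k - 1`). -/
abbrev MMOVert {V : Type} [Fintype V] [DecidableEq V] (G : SimpleGraph V)
    [DecidableRel G.Adj] (w : Sym2 V → ℕ) : Type :=
  V ⊕ (Σ e : G.edgeSet, Fin (w e))

/-- Edge relation of the delegation graph `H` constructed from `(G, w)`: for every edge
`e = {u, v}` of `G`, the edges `(a_{e,1}, b_u)` and `(a_{e,1}, b_v)`, and the edges
`(a_{e,i}, a_{e,i-1})` for `2 ≤ i ≤ w(e)`. -/
inductive MMOAdj {V : Type} [Fintype V] [DecidableEq V] (G : SimpleGraph V)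
    [DecidableRel G.Adj] (w : Sym2 V → ℕ) :
    MMOVert G w → MMOVert G w → Prop
  | toSink (e : G.edgeSet) (i : Fin (w e)) (u : V) (hu : u ∈ (e : Sym2 V))
      (hi : (i : ℕ) = 0) :
      MMOAdj G w (Sum.inr ⟨e, i⟩) (Sum.inl u)
  | step (e : G.edgeSet) (i j : Fin (w e)) (hij : (i : ℕ) = (j : ℕ) + 1) :
      MMOAdj G w (Sum.inr ⟨e, i⟩) (Sum.inr ⟨e, j⟩)

/-- `Λ` is an orientation of the undirected graph `G`: it only orients edges of `G`,
and each edge of `G` gets exactly one of its two possible directions. -/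
def IsOrientation {V : Type} (G : SimpleGraph V) (Λ : V → V → Bool) : Prop :=
  (∀ u v, Λ u v = true → G.Adj u v) ∧
  (∀ u v, G.Adj u v → (Λ u v = !(Λ v u)))

/-- The weighted out-degree of `v` under the orientation `Λ` with edge weights `w`. -/
def wOutDeg {V : Type} [Fintype V] (w : Sym2 V → ℕ) (Λ : V → V → Bool) (v : V) : ℕ :=
  ∑ u : V, if Λ v u then w s(v, u) else 0

section Aux

variable {V : Type} [Fintype V] [DecidableEq V] (G : SimpleGraph V)
    [DecidableRel G.Adj] (w : Sym2 V → ℕ) (Λ : V → V → Bool)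

/-- The chosen delegation relation: each chain `a_{e,·}` delegates down the chain and
finally to the tail of `e` under the orientation `Λ`. -/
inductive MMOSol : MMOVert G w → MMOVert G w → Prop
  | toSink (e : G.edgeSet) (i : Fin (w e)) (u v : V) (he : (e : Sym2 V) = s(u, v))
      (hv : Λ u v = true) (hi : (i : ℕ) = 0) : MMOSol (Sum.inr ⟨e, i⟩) (Sum.inl u)
  | step (e : G.edgeSet) (i j : Fin (w e)) (hij : (i : ℕ) = (j : ℕ) + 1) :
      MMOSol (Sum.inr ⟨e, i⟩) (Sum.inr ⟨e, j⟩)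

/-- A decreasing measure along `MMOSol`. -/
def mmoMes : MMOVert G w → ℕ
  | Sum.inl _ => 0
  | Sum.inr ⟨_, i⟩ => (i : ℕ) + 1

end Aux

set_option maxHeartbeats 1000000 in
/-- if there is an orientation of `G` under which every vertex has weighted
out-degree at most `r`, then `(H, r + 1)` is a yes-instance of Resolve Delegation. -/
theorem stmt_6 {V : Type} [Fintype V] [DecidableEq V]
    (G : SimpleGraph V) [DecidableRel G.Adj]
    (w : Sym2 V → ℕ) (hw : ∀ e ∈ G.edgeSet, 1 ≤ w e)
    (r : ℕ) (hr : 1 ≤ r)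
    (Λ : V → V → Bool) (hΛ : IsOrientation G Λ)
    (hout : ∀ v : V, wOutDeg w Λ v ≤ r) :
    YesInstance (MMOAdj G w) (r + 1) := by
  classical
  obtain ⟨hΛ1, hΛ2⟩ := hΛ
  refine ⟨MMOSol G w Λ, ?_, ?_, ?_, ?_⟩
  · -- spanning subgraph
    rintro x y h
    cases h with
    | toSink e i u v he hv hi =>
        exact MMOAdj.toSink e i u (by rw [he]; exact Sym2.mem_mk_left u v) hi
    | step e i j hij => exact MMOAdj.step e i j hij
  · -- acyclicity
    intro x hx
    have key : ∀ a b : MMOVert G w, Relation.TransGen (MMOSol G w Λ) a b →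
        mmoMes G w b < mmoMes G w a := by
      intro a b h
      induction h with
      | single h => cases h with
        | toSink e i u v he hv hi => simp [mmoMes]
        | step e i j hij => simp [mmoMes, hij]
      | tail h1 h2 ih =>
          refine lt_trans ?_ ih
          cases h2 with
          | toSink e i u v he hv hi => simp [mmoMes]
          | step e i j hij => simp [mmoMes, hij]
    exact lt_irrefl _ (key x x hx)
  · -- out-degree 1 at non-sinks
    rintro (u | ⟨e, i⟩) hns
    · exact absurd (fun y h => by cases h) hns
    · by_cases hi : (i : ℕ) = 0
      · -- delegate to the tail of e
        obtain ⟨u, v, he, hv⟩ : ∃ u v, (e : Sym2 V) = s(u, v) ∧ Λ u v = true := by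
          obtain ⟨e, hee⟩ := e
          induction e using Sym2.inductionOn with
          | hf a b =>
              have hab : G.Adj a b := hee
              have h2 := hΛ2 a b hab
              cases hba : Λ b a with
              | false => exact ⟨a, b, rfl, by rw [h2, hba]; rfl⟩
              | true => exact ⟨b, a, Sym2.eq_swap, hba⟩
        have : {y | MMOSol G w Λ (Sum.inr ⟨e, i⟩) y} = {Sum.inl u} := by
          ext y
          simp only [Set.mem_setOf_eq, Set.mem_singleton_iff]
          constructor
          · intro h
            cases h with
            | toSink e' i' u' v' he' hv' hi' =>
                -- u' = u by uniqueness of orientation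
                rw [he] at he'
                rcases Sym2.eq_iff.mp he' with ⟨h1, h2⟩ | ⟨h1, h2⟩
                · rw [← h1]
                · rw [← h2, ← h1] at hv'
                  have hb := hΛ2 u v (hΛ1 _ _ hv)
                  rw [hv, hv'] at hb
                  exact absurd hb (by simp)
            | step e' i' j hij => omega
          · rintro rfl
            exact MMOSol.toSink e i u v he hv hi
        rw [this, Set.ncard_singleton]
      · -- delegate down the chain
        have hlt : (i : ℕ) - 1 < w e := lt_of_le_of_lt (Nat.sub_le _ _) i.isLt
        have hstep : (i : ℕ) = ((⟨(i : ℕ) - 1, hlt⟩ : Fin (w e)) : ℕ) + 1 := by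
          simp; omega
        have : {y | MMOSol G w Λ (Sum.inr ⟨e, i⟩) y} =
            {Sum.inr ⟨e, ⟨(i : ℕ) - 1, hlt⟩⟩} := by
          ext y
          simp only [Set.mem_setOf_eq, Set.mem_singleton_iff]
          constructor
          · intro h
            cases h with
            | toSink e' i' u' v' he' hv' hi' => omega
            | step e' i' j hij =>
                have : j = (⟨(i : ℕ) - 1, hlt⟩ : Fin (w e)) := by
                  apply Fin.ext; simp; omega
                rw [this]
          · rintro rfl
            exact MMOSol.step e i _ hstep
        rw [this, Set.ncard_singleton]
  · -- sink load bound
    rintro (u | ⟨e, i⟩) hsink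
    · -- the interesting case: t = Sum.inl u
      set P : G.edgeSet → Prop := fun e => ∃ v, (e : Sym2 V) = s(u, v) ∧ Λ u v = true
        with hP
      -- reachability characterization
      have reach : ∀ x : MMOVert G w,
          Relation.ReflTransGen (MMOSol G w Λ) x (Sum.inl u) →
          x = Sum.inl u ∨ ∃ (e : G.edgeSet) (i : Fin (w e)),
            x = Sum.inr ⟨e, i⟩ ∧ P e := by
        intro x hx
        induction hx using Relation.ReflTransGen.head_induction_on with
        | refl => exact Or.inl rfl
        | head hstep htail ih =>
            cases hstep with
            | toSink e i u' v' he hv hi =>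
                rcases ih with h | ⟨e', i', heq, _⟩
                · obtain rfl : u' = u := by injection h
                  exact Or.inr ⟨e, i, rfl, v', he, hv⟩
                · exact absurd heq (by simp)
            | step e i j hij =>
                rcases ih with h | ⟨e', i', heq, hPe'⟩
                · exact absurd h (by simp)
                · injection heq with h2
                  obtain ⟨rfl, -⟩ := Sigma.mk.inj_iff.mp h2
                  exact Or.inr ⟨e, i, rfl, hPe'⟩
      -- the reach set is contained in an explicit set
      have hsub : {x | Relation.ReflTransGen (MMOSol G w Λ) x (Sum.inl u)} ⊆
          {Sum.inl u} ∪ Sum.inr '' {p : Σ e : G.edgeSet, Fin (w e) | P p.1} := by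
        intro x hx
        rcases reach x hx with rfl | ⟨e, i, rfl, hPe⟩
        · exact Or.inl rfl
        · exact Or.inr ⟨⟨e, i⟩, hPe, rfl⟩
      -- count the explicit set
      set F : Finset (Σ e : G.edgeSet, Fin (w e)) :=
        Finset.univ.filter (fun p => P p.1) with hF
      have hSF : {p : Σ e : G.edgeSet, Fin (w e) | P p.1} = ↑F := by
        ext p; simp [hF]
      have hFcard : F.card = ∑ e ∈ Finset.univ.filter P, w e := by
        have : F = (Finset.univ.filter P).sigma (fun e => (Finset.univ : Finset (Fin (w e)))) := by
          ext ⟨e, i⟩; simp [hF]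
        rw [this, Finset.card_sigma]
        simp
      -- the weight sum is bounded by the weighted out-degree
      have hsum : ∑ e ∈ Finset.univ.filter P, w e ≤ wOutDeg w Λ u := by
        set φ : G.edgeSet → V := fun e => if h : P e then h.choose else u with hφ
        have hspec : ∀ e ∈ Finset.univ.filter P,
            (e : Sym2 V) = s(u, φ e) ∧ Λ u (φ e) = true := by
          intro e he
          rw [Finset.mem_filter] at he
          have h := he.2
          simp only [hφ, dif_pos h]
          exact h.choose_spec
        have hinj : ∀ e ∈ Finset.univ.filter P, ∀ e' ∈ Finset.univ.filter P,
            φ e = φ e' → e = e' := by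
          intro e he e' he' hee
          have h1 := (hspec e he).1
          have h2 := (hspec e' he').1
          apply Subtype.ext
          rw [h1, h2, hee]
        calc ∑ e ∈ Finset.univ.filter P, w e
            = ∑ e ∈ Finset.univ.filter P, w s(u, φ e) := by
              refine Finset.sum_congr rfl fun e he => ?_
              rw [← (hspec e he).1]
          _ = ∑ v ∈ (Finset.univ.filter P).image φ, w s(u, v) :=
              (Finset.sum_image (f := fun v => w s(u, v)) hinj).symm
          _ = ∑ v ∈ (Finset.univ.filter P).image φ,
                (if Λ u v then w s(u, v) else 0) := by
              refine Finset.sum_congr rfl fun v hv => ?_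
              rw [Finset.mem_image] at hv
              obtain ⟨e, he, rfl⟩ := hv
              rw [if_pos ((hspec e he).2)]
          _ ≤ ∑ v : V, (if Λ u v then w s(u, v) else 0) :=
              Finset.sum_le_sum_of_subset (Finset.subset_univ _)
          _ = wOutDeg w Λ u := rfl
      -- put everything together
      calc Set.ncard {x | Relation.ReflTransGen (MMOSol G w Λ) x (Sum.inl u)}
          ≤ Set.ncard ({Sum.inl u} ∪
              Sum.inr '' {p : Σ e : G.edgeSet, Fin (w e) | P p.1}) :=
            Set.ncard_le_ncard hsub (Set.toFinite _)
        _ ≤ Set.ncard {(Sum.inl u : MMOVert G w)} +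
              Set.ncard (Sum.inr '' {p : Σ e : G.edgeSet, Fin (w e) | P p.1}) :=
            Set.ncard_union_le _ _
        _ = 1 + Set.ncard {p : Σ e : G.edgeSet, Fin (w e) | P p.1} := by
            rw [Set.ncard_singleton, Set.ncard_image_of_injective _ Sum.inr_injective]
        _ = 1 + F.card := by rw [hSF, Set.ncard_coe_finset]
        _ ≤ 1 + wOutDeg w Λ u := by rw [hFcard]; exact Nat.add_le_add_left hsum _
        _ ≤ 1 + r := Nat.add_le_add_left (hout u) _
        _ = r + 1 := Nat.add_comm 1 r
    · -- Sum.inr is never a sink of MMOAdj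
      exfalso
      by_cases hi : (i : ℕ) = 0
      · exact hsink (Sum.inl (e : Sym2 V).out.1)
          (MMOAdj.toSink e i _ (Sym2.out_fst_mem _) hi)
      · have hlt : (i : ℕ) - 1 < w e := lt_of_le_of_lt (Nat.sub_le _ _) i.isLt
        exact hsink (Sum.inr ⟨e, ⟨(i : ℕ) - 1, hlt⟩⟩)
          (MMOAdj.step e i _ (by simp; omega))
end

section
/- Let G=(V,E) be a finite undirected graph with edge weights w : E → ℕ≥1, let r be a positive integer, and let H be the delegation graph constructed from (G, w) as described. If (H, r+1) is a yes-instance of Resolve Delegation, then there exists an orientation Λ of G such that the weighted out-degree of every vertex of G under Λ is at most r. -/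
/-- if `(H, r + 1)` is a yes-instance of Resolve Delegation, then there is
an orientation of `G` under which every vertex has weighted out-degree at most `r`. -/
theorem stmt_7 {V : Type} [Fintype V] [DecidableEq V]
    (G : SimpleGraph V) [DecidableRel G.Adj]
    (w : Sym2 V → ℕ) (hw : ∀ e ∈ G.edgeSet, 1 ≤ w e)
    (r : ℕ) (hr : 1 ≤ r)
    (hyes : YesInstance (MMOAdj G w) (r + 1)) :
    ∃ Λ : V → V → Bool, IsOrientation G Λ ∧ ∀ v : V, wOutDeg w Λ v ≤ r := by
  classical
  obtain ⟨H, hSub, hAcyc, hOut, hSink⟩ := hyes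
  have hpos : ∀ e : G.edgeSet, 0 < w e := fun e => hw e e.2
  have hns : ∀ (e : G.edgeSet) (i : Fin (w ↑e)), ¬ IsSink (MMOAdj G w) (Sum.inr ⟨e, i⟩) := by
    intro e i hsink
    rcases Nat.eq_zero_or_pos i.val with h0 | hp
    · exact hsink _ (MMOAdj.toSink e i _ (Sym2.out_fst_mem _) h0)
    · exact hsink (Sum.inr ⟨e, ⟨i.val - 1, lt_of_le_of_lt (Nat.sub_le _ _) i.isLt⟩⟩)
        (MMOAdj.step e i _ (by simp only [Fin.val_mk]; omega))
  have hout1 : ∀ (e : G.edgeSet) (i : Fin (w ↑e)),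
      ∃ x, H (Sum.inr ⟨e, i⟩) x ∧ ∀ y, H (Sum.inr ⟨e, i⟩) y → y = x := by
    intro e i
    have h1 := hOut _ (hns e i)
    rw [Set.ncard_eq_one] at h1
    obtain ⟨x, hx⟩ := h1
    exact ⟨x, (Set.ext_iff.mp hx x).mpr rfl, fun y hy => (Set.ext_iff.mp hx y).mp hy⟩
  have hf : ∀ e : G.edgeSet, ∃ u : V, u ∈ (e : Sym2 V) ∧
      H (Sum.inr ⟨e, ⟨0, hpos e⟩⟩) (Sum.inl u) ∧
      ∀ y, H (Sum.inr ⟨e, ⟨0, hpos e⟩⟩) y → y = Sum.inl u := by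
    intro e
    obtain ⟨x, hx, hxu⟩ := hout1 e ⟨0, hpos e⟩
    have hadj := hSub _ _ hx
    cases hadj with
    | toSink e' i u hu hi => exact ⟨u, hu, hx, hxu⟩
    | step e' i j hij => simp at hij
  set f : G.edgeSet → V := fun e => (hf e).choose with hfdef
  have hfmem : ∀ e : G.edgeSet, f e ∈ (e : Sym2 V) := fun e => (hf e).choose_spec.1
  have hfH : ∀ e, H (Sum.inr ⟨e, ⟨0, hpos e⟩⟩) (Sum.inl (f e)) := fun e => (hf e).choose_spec.2.1
  have hreach : ∀ (e : G.edgeSet) (n : ℕ) (i : Fin (w ↑e)), i.val = n →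
      Relation.ReflTransGen H (Sum.inr ⟨e, i⟩) (Sum.inr ⟨e, ⟨0, hpos e⟩⟩) := by
    intro e n
    induction n with
    | zero =>
      intro i hi
      rw [show i = ⟨0, hpos e⟩ from Fin.ext hi]
    | succ k ih =>
      intro i hi
      obtain ⟨x, hx, _⟩ := hout1 e i
      have hadj := hSub _ _ hx
      cases hadj with
      | toSink e' i' u hu h0 => omega
      | step e' i' j hij =>
        exact Relation.ReflTransGen.head hx (ih j (by omega))
  have hreachf : ∀ (e : G.edgeSet) (i : Fin (w ↑e)),
      Relation.ReflTransGen H (Sum.inr ⟨e, i⟩) (Sum.inl (f e)) :=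
    fun e i => (hreach e i.val i rfl).trans (Relation.ReflTransGen.single (hfH e))
  let Λ : V → V → Bool := fun a b => if h : G.Adj a b then decide (f ⟨s(a, b), h⟩ = a) else false
  have hΛ : ∀ a b, Λ a b = true ↔ ∃ h : G.Adj a b, f ⟨s(a, b), h⟩ = a := by
    intro a b
    simp only [Λ]
    split
    · rename_i h
      simp only [decide_eq_true_eq]
      exact ⟨fun hh => ⟨h, hh⟩, fun ⟨_, hh⟩ => hh⟩
    · rename_i h
      simp only [Bool.false_eq_true, false_iff]
      rintro ⟨h', _⟩
      exact h h'
  refine ⟨Λ, ⟨?_, ?_⟩, ?_⟩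
  · intro u v huv
    obtain ⟨h, -⟩ := (hΛ u v).mp huv
    exact h
  · intro u v huv
    have hne : u ≠ v := huv.ne
    have hee : (⟨s(u, v), huv⟩ : G.edgeSet) = ⟨s(v, u), huv.symm⟩ := Subtype.ext (Sym2.eq_swap)
    have hmem := hfmem ⟨s(u, v), huv⟩
    rw [Sym2.mem_iff] at hmem
    rcases hmem with h1 | h1
    · have hΛuv : Λ u v = true := (hΛ u v).mpr ⟨huv, h1⟩
      have hnvu : Λ v u ≠ true := by
        intro hvu
        obtain ⟨h', h2⟩ := (hΛ v u).mp hvu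
        have h2' : f (⟨s(v, u), huv.symm⟩ : G.edgeSet) = v := h2
        rw [← hee] at h2'
        exact hne (h1.symm.trans h2')
      have hb : Λ v u = false := Bool.eq_false_iff.mpr hnvu
      rw [hΛuv, hb]; rfl
    · have hΛvu : Λ v u = true := by
        refine (hΛ v u).mpr ⟨huv.symm, ?_⟩
        rw [← hee]
        exact h1
      have hnuv : Λ u v ≠ true := by
        intro huv'
        obtain ⟨h', h2⟩ := (hΛ u v).mp huv'
        have h2' : f (⟨s(u, v), huv⟩ : G.edgeSet) = u := h2
        exact hne (h2'.symm.trans h1)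
      have hb : Λ u v = false := Bool.eq_false_iff.mpr hnuv
      rw [hb, hΛvu]; rfl
  · intro v
    have hsinkv : IsSink (MMOAdj G w) (Sum.inl v) := by
      intro x hx
      cases hx
    have hcard := hSink (Sum.inl v) hsinkv
    set S : Finset (MMOVert G w) :=
      Finset.univ.filter (fun x => Relation.ReflTransGen H x (Sum.inl v)) with hSdef
    have hSeq : {x : MMOVert G w | Relation.ReflTransGen H x (Sum.inl v)} = ↑S := by
      ext x; simp [hSdef]
    rw [hSeq, Set.ncard_coe_finset] at hcard
    have hvS : Sum.inl v ∈ S := by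
      simp only [hSdef, Finset.mem_filter, Finset.mem_univ, true_and]
      exact Relation.ReflTransGen.refl
    set A : Finset V := Finset.univ.filter (fun u => Λ v u = true) with hAdef
    have hsum : wOutDeg w Λ v = ∑ u ∈ A, w s(v, u) := by
      simp [wOutDeg, hAdef, Finset.sum_filter]
    set B : Finset (Σ u : V, Fin (w s(v, u))) := A.sigma (fun u => Finset.univ) with hBdef
    have hBcard : B.card = ∑ u ∈ A, w s(v, u) := by
      rw [hBdef, Finset.card_sigma]
      simp
    let φ : (Σ u : V, Fin (w s(v, u))) → MMOVert G w := fun p =>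
      if h : G.Adj v p.1 then Sum.inr ⟨⟨s(v, p.1), h⟩, p.2⟩ else Sum.inl v
    have hmemB : ∀ p : (Σ u : V, Fin (w s(v, u))), p ∈ B →
        ∃ h : G.Adj v p.1, f ⟨s(v, p.1), h⟩ = v := by
      intro p hp
      rw [hBdef, Finset.mem_sigma] at hp
      obtain ⟨hpA, -⟩ := hp
      rw [hAdef, Finset.mem_filter] at hpA
      exact (hΛ v p.1).mp hpA.2
    have hmaps : ∀ p ∈ B, φ p ∈ S.erase (Sum.inl v) := by
      intro p hp
      obtain ⟨h, hfp⟩ := hmemB p hp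
      have hφp : φ p = Sum.inr ⟨⟨s(v, p.1), h⟩, p.2⟩ := by
        simp only [φ]; rw [dif_pos h]
      rw [Finset.mem_erase, hφp]
      refine ⟨by simp, ?_⟩
      rw [hSdef, Finset.mem_filter]
      refine ⟨Finset.mem_univ _, ?_⟩
      have hrr := hreachf ⟨s(v, p.1), h⟩ p.2
      rw [hfp] at hrr
      exact hrr
    have hinj : Set.InjOn φ ↑B := by
      intro p hp q hq hpq
      obtain ⟨hpadj, -⟩ := hmemB p (Finset.mem_coe.mp hp)
      obtain ⟨hqadj, -⟩ := hmemB q (Finset.mem_coe.mp hq)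
      rw [show φ p = Sum.inr ⟨⟨s(v, p.1), hpadj⟩, p.2⟩ from by simp only [φ]; rw [dif_pos hpadj],
          show φ q = Sum.inr ⟨⟨s(v, q.1), hqadj⟩, q.2⟩ from by simp only [φ]; rw [dif_pos hqadj]]
          at hpq
      have hpq' : (⟨⟨s(v, p.1), hpadj⟩, p.2⟩ : Σ e : G.edgeSet, Fin (w ↑e))
          = ⟨⟨s(v, q.1), hqadj⟩, q.2⟩ := Sum.inr.inj hpq
      have h1 : p.1 = q.1 := by
        have h2 := congrArg (fun x : (Σ e : G.edgeSet, Fin (w ↑e)) => (x.1 : Sym2 V)) hpq'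
        simp only at h2
        exact Sym2.congr_right.mp h2
      obtain ⟨p1, p2⟩ := p
      obtain ⟨q1, q2⟩ := q
      simp only at h1
      subst h1
      have h3 : p2 = q2 := by
        injection hpq' with h4 h5
        all_goals exact eq_of_heq h5
      rw [h3]
    have hB_le : B.card ≤ (S.erase (Sum.inl v)).card :=
      Finset.card_le_card_of_injOn φ hmaps hinj
    have herase : (S.erase (Sum.inl v)).card = S.card - 1 := Finset.card_erase_of_mem hvS
    have hSpos : 1 ≤ S.card := Finset.card_pos.mpr ⟨_, hvS⟩
    rw [hsum, ← hBcard]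
    omega
end

section
/- Let G=(V,E) be a delegation graph with sink set T, let k = |V∖T|, and let λ ≥ 2 be an integer. Suppose v ∈ V∖T has in-degree 0 in G and has at least k out-neighbors belonging to T. Let G−v be the graph obtained from G by deleting v and all its incident edges (its sink set is T). Then (G, λ) is a yes-instance of Resolve Delegation if and only if (G−v, λ) is a yes-instance of Resolve Delegation. -/
open Relation

section Aux
variable {W : Type} {E' H' : W → W → Prop}

lemma rtg_from_sink (hsub : ∀ a b, H' a b → E' a b) {t b : W} (ht : IsSink E' t)
    (h : ReflTransGen H' t b) : b = t := by
  rcases h.cases_head with h | ⟨c, hc, _⟩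
  · exact h.symm
  · exact absurd (hsub _ _ hc) (ht c)

lemma sink_unique (hsub : ∀ a b, H' a b → E' a b)
    (hout : ∀ x, ¬ IsSink E' x → Set.ncard {y | H' x y} = 1)
    {t1 t2 : W} (ht1 : IsSink E' t1) (ht2 : IsSink E' t2)
    {u : W} (h1 : ReflTransGen H' u t1) (h2 : ReflTransGen H' u t2) : t1 = t2 := by
  revert h2
  induction h1 using Relation.ReflTransGen.head_induction_on with
  | refl => exact fun h2 => (rtg_from_sink hsub ht1 h2).symm
  | head h' hrest ih =>
    intro h2
    rcases h2.cases_head with rfl | ⟨c', hc', h2'⟩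
    · exact absurd (hsub _ _ h') (ht2 _)
    · have hns : ¬ IsSink E' _ := fun hs => hs _ (hsub _ _ h')
      obtain ⟨w, hw⟩ := Set.ncard_eq_one.mp (hout _ hns)
      have h1w := hw ▸ (Set.mem_setOf.mpr h')
      have h2w := hw ▸ (Set.mem_setOf.mpr hc')
      rw [Set.mem_singleton_iff] at h1w h2w
      exact ih (h1w ▸ h2w ▸ h2')

end Aux

/-- reduction rule RD.3.  Let `k` be the number of non-sink vertices and
let `λ ≥ 2`.  If the non-sink vertex `v` has in-degree 0 and at least `k` of its
out-neighbors are sinks, then `(G, λ)` is a yes-instance iff `(G - v, λ)` is. -/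
theorem stmt_15 {V : Type} [Fintype V] [DecidableEq V]
    (E : V → V → Prop) (hloop : ∀ x, ¬ E x x)
    (lam : ℕ) (hlam : 2 ≤ lam)
    (v : V) (hv : ¬ IsSink E v)
    (hin : ∀ x, ¬ E x v)
    (hk : Set.ncard {x | ¬ IsSink E x} ≤ Set.ncard {u | E v u ∧ IsSink E u}) :
    YesInstance E lam ↔
    YesInstance (fun (x y : {x : V // x ≠ v}) => E x.1 y.1) lam := by
  constructor
  · rintro ⟨H, hsub, hacyc, hout, hcnt⟩
    refine ⟨fun x y => H x.1 y.1, fun a b h => hsub _ _ h, ?_, ?_, ?_⟩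
    · intro x hx
      exact hacyc x.1 (Relation.TransGen.lift Subtype.val (fun a b h => h) _ _ hx)
    · intro x hx
      have hxE : ¬ IsSink E x.1 := fun hs => hx (fun u => hs u.1)
      obtain ⟨a, ha⟩ := Set.ncard_eq_one.mp (hout _ hxE)
      have hmem : ∀ u, H x.1 u ↔ u = a := by
        intro u; rw [← Set.mem_singleton_iff, ← ha]; rfl
      have haH : H x.1 a := (hmem a).mpr rfl
      have hav : a ≠ v := by
        intro h; rw [h] at haH; exact hin x.1 (hsub _ _ haH)
      have hset : {u : {x : V // x ≠ v} | H x.1 u.1} = {⟨a, hav⟩} := by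
        ext u
        simp only [Set.mem_setOf_eq, Set.mem_singleton_iff]
        constructor
        · intro h; exact Subtype.ext ((hmem u.1).mp h)
        · rintro rfl; exact haH
      rw [hset, Set.ncard_singleton]
    · intro t ht
      have htE : IsSink E t.1 := by
        intro u hu
        by_cases h : u = v
        · exact hin t.1 (h ▸ hu)
        · exact ht ⟨u, h⟩ hu
      calc Set.ncard {u : {x : V // x ≠ v} | ReflTransGen (fun a b => H a.1 b.1) u t}
          = Set.ncard (Subtype.val '' {u | ReflTransGen (fun a b => H a.1 b.1) u t}) :=
            (Set.ncard_image_of_injective _ Subtype.val_injective).symm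
        _ ≤ Set.ncard {u : V | ReflTransGen H u t.1} := by
            refine Set.ncard_le_ncard ?_ (Set.toFinite _)
            rintro _ ⟨u, hu, rfl⟩
            exact Relation.ReflTransGen.lift Subtype.val (fun a b h => h) _ _ hu
        _ ≤ lam := hcnt _ htE
  · rintro ⟨H', hsub', hacyc', hout', hcnt'⟩
    classical
    set E' : {x : V // x ≠ v} → {x : V // x ≠ v} → Prop := fun x y => E x.1 y.1 with hE'
    -- Reachability in H' phrased over V
    set Reach : V → V → Prop :=
      fun u t => ∃ (hu : u ≠ v) (ht : t ≠ v), ReflTransGen H' ⟨u, hu⟩ ⟨t, ht⟩ with hReach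
    -- Step 1: find a good sink t
    have hstep1 : ∃ t, (E v t ∧ IsSink E t) ∧ ∀ u, Reach u t → u = t := by
      by_contra hcon
      push_neg at hcon
      -- injection from sink-outneighbors of v into nonsinks ≠ v
      set f : V → V := fun t => if h : ∃ u, Reach u t ∧ u ≠ t then h.choose else t with hf
      have hspec : ∀ t ∈ {u | E v u ∧ IsSink E u}, Reach (f t) t ∧ f t ≠ t := by
        intro t ht
        obtain ⟨u, hu1, hu2⟩ := hcon t ⟨ht.1, ht.2⟩
        have h : ∃ u, Reach u t ∧ u ≠ t := ⟨u, hu1, hu2⟩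
        simp only [hf, dif_pos h]
        exact h.choose_spec
      have hsinkE' : ∀ (t : V) (ht : t ≠ v), IsSink E t → IsSink E' ⟨t, ht⟩ :=
        fun t ht hs u hu => hs u.1 hu
      have hmapsto : ∀ t ∈ {u | E v u ∧ IsSink E u}, f t ∈ {x | ¬ IsSink E x} \ {v} := by
        intro t ht
        obtain ⟨⟨hfv, htv, hrtg⟩, hne⟩ := hspec t ht
        rcases hrtg.cases_head with heq | ⟨c, hc, _⟩
        · exact absurd (congrArg Subtype.val heq) hne
        · exact ⟨fun hs => hs c.1 (hsub' _ _ hc), hfv⟩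
      have hinj : Set.InjOn f {u | E v u ∧ IsSink E u} := by
        intro t1 ht1 t2 ht2 heq
        obtain ⟨⟨hfv1, htv1, hrtg1⟩, _⟩ := hspec t1 ht1
        obtain ⟨⟨hfv2, htv2, hrtg2⟩, _⟩ := hspec t2 ht2
        have hrtg2' : ReflTransGen H' ⟨f t1, hfv1⟩ ⟨t2, htv2⟩ := by
          have hsub : (⟨f t1, hfv1⟩ : {x : V // x ≠ v}) = ⟨f t2, hfv2⟩ := Subtype.ext heq
          rw [hsub]; exact hrtg2
        have := sink_unique hsub' hout' (hsinkE' t1 htv1 ht1.2) (hsinkE' t2 htv2 ht2.2)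
          hrtg1 hrtg2'
        exact congrArg Subtype.val this
      have h1 : Set.ncard {u | E v u ∧ IsSink E u} ≤ Set.ncard ({x | ¬ IsSink E x} \ {v}) :=
        Set.ncard_le_ncard_of_injOn f hmapsto hinj (Set.toFinite _)
      have h2 : Set.ncard ({x | ¬ IsSink E x} \ {v}) < Set.ncard {x | ¬ IsSink E x} :=
        Set.ncard_diff_singleton_lt_of_mem hv (Set.toFinite _)
      omega
    obtain ⟨t, ⟨htedge, htsink⟩, htuniq⟩ := hstep1
    have htv : t ≠ v := by intro h; rw [h] at htsink; exact hv htsink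
    set H : V → V → Prop :=
      fun x y => (x = v ∧ y = t) ∨ ∃ (hx : x ≠ v) (hy : y ≠ v), H' ⟨x, hx⟩ ⟨y, hy⟩ with hH
    have hHsub : ∀ a b, H a b → E a b := by
      rintro a b (⟨rfl, rfl⟩ | ⟨hx, hy, h⟩)
      · exact htedge
      · exact hsub' _ _ h
    have hnotov : ∀ a, ¬ H a v := by
      rintro a (⟨_, h⟩ | ⟨_, hy, _⟩)
      · exact htv h.symm
      · exact hy rfl
    have htrans : ∀ a b, TransGen H a b → ∀ ha : a ≠ v,
        ∃ hb : b ≠ v, TransGen H' ⟨a, ha⟩ ⟨b, hb⟩ := by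
      intro a b h
      induction h with
      | single h =>
        intro ha
        rcases h with ⟨h1, _⟩ | ⟨hx, hy, h'⟩
        · exact absurd h1 ha
        · exact ⟨hy, TransGen.single h'⟩
      | tail hab hbc ih =>
        intro ha
        obtain ⟨hb, hT⟩ := ih ha
        rcases hbc with ⟨hbv, _⟩ | ⟨hx, hy, h'⟩
        · exact absurd hbv hb
        · exact ⟨hy, hT.tail h'⟩
    have hacyc : ∀ x, ¬ TransGen H x x := by
      intro x hx
      by_cases hxv : x = v
      · subst hxv
        cases hx with
        | single h => exact hnotov _ h
        | tail _ h => exact hnotov _ h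
      · obtain ⟨hb, hT⟩ := htrans _ _ hx hxv
        exact hacyc' ⟨x, hxv⟩ hT
    have hout : ∀ x, ¬ IsSink E x → Set.ncard {u | H x u} = 1 := by
      intro x hx
      by_cases hxv : x = v
      · rw [hxv]
        have houtv : {u | H v u} = {t} := by
          ext u
          simp only [Set.mem_setOf_eq, Set.mem_singleton_iff, hH]
          constructor
          · rintro (⟨_, rfl⟩ | ⟨hx2, _, _⟩)
            · rfl
            · exact absurd rfl hx2
          · rintro rfl; left; constructor <;> trivial
        rw [houtv, Set.ncard_singleton]
      · have hxE' : ¬ IsSink E' ⟨x, hxv⟩ := by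
          intro hsk
          apply hx
          intro u hu
          by_cases huv : u = v
          · rw [huv] at hu; exact hin x hu
          · exact hsk ⟨u, huv⟩ hu
        obtain ⟨a, ha⟩ := Set.ncard_eq_one.mp (hout' _ hxE')
        have hmem : ∀ u : {x : V // x ≠ v}, H' ⟨x, hxv⟩ u ↔ u = a := by
          intro u; rw [← Set.mem_singleton_iff, ← ha]; rfl
        have hset : {u | H x u} = {a.1} := by
          ext u
          simp only [Set.mem_setOf_eq, Set.mem_singleton_iff, hH]
          constructor
          · rintro (⟨h1, _⟩ | ⟨hx2, hy, h'⟩)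
            · exact absurd h1 hxv
            · exact congrArg Subtype.val ((hmem ⟨u, hy⟩).mp h')
          · rintro rfl
            exact Or.inr ⟨hxv, a.2, (hmem a).mpr rfl⟩
        rw [hset, Set.ncard_singleton]
    have hcnt : ∀ s, IsSink E s → Set.ncard {u | ReflTransGen H u s} ≤ lam := by
      intro s hs
      have hsv : s ≠ v := by intro h; rw [h] at hs; exact hv hs
      have hs' : IsSink E' ⟨s, hsv⟩ := fun u hu => hs u.1 hu
      have hsubB : {u | ReflTransGen H u s} ⊆
          insert v (Subtype.val '' {u : {x : V // x ≠ v} | ReflTransGen H' u ⟨s, hsv⟩}) := by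
        intro u hu
        by_cases huv : u = v
        · rw [huv]; exact Set.mem_insert v _
        · refine Set.mem_insert_of_mem _ ?_
          rcases Relation.reflTransGen_iff_eq_or_transGen.mp hu with heq | hT
          · refine ⟨⟨u, huv⟩, ?_, rfl⟩
            show ReflTransGen H' _ _
            rw [show (⟨s, hsv⟩ : {x : V // x ≠ v}) = ⟨u, huv⟩ from Subtype.ext heq]
          · obtain ⟨hb, hT'⟩ := htrans _ _ hT huv
            exact ⟨⟨u, huv⟩, hT'.to_reflTransGen, rfl⟩
      by_cases hst : s = t
      · have hBsing : {u : {x : V // x ≠ v} | ReflTransGen H' u ⟨s, hsv⟩} = {⟨s, hsv⟩} := by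
          ext u
          simp only [Set.mem_setOf_eq, Set.mem_singleton_iff]
          constructor
          · intro h
            have hr : Reach u.1 s := ⟨u.2, hsv, h⟩
            rw [hst] at hr
            exact Subtype.ext ((htuniq u.1 hr).trans hst.symm)
          · rintro rfl; exact ReflTransGen.refl
        calc Set.ncard {u | ReflTransGen H u s}
            ≤ Set.ncard (insert v (Subtype.val ''
                {u : {x : V // x ≠ v} | ReflTransGen H' u ⟨s, hsv⟩})) :=
              Set.ncard_le_ncard hsubB (Set.toFinite _)
          _ ≤ Set.ncard (Subtype.val ''
                {u : {x : V // x ≠ v} | ReflTransGen H' u ⟨s, hsv⟩}) + 1 :=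
              Set.ncard_insert_le _ _
          _ = 1 + 1 := by
              rw [Set.ncard_image_of_injective _ Subtype.val_injective, hBsing,
                Set.ncard_singleton]
          _ ≤ lam := hlam
      · have hvnot : v ∉ {u | ReflTransGen H u s} := by
          intro hu
          rcases Relation.reflTransGen_iff_eq_or_transGen.mp hu with heq | hT
          · rw [heq] at hs; exact hv hs
          · obtain ⟨c, hvc, hcs⟩ := Relation.TransGen.head'_iff.mp hT
            rcases hvc with ⟨_, rfl⟩ | ⟨hx, _, _⟩
            · exact hst (rtg_from_sink hHsub htsink hcs)
            · exact hx rfl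
        have hsub2 : {u | ReflTransGen H u s} ⊆
            Subtype.val '' {u : {x : V // x ≠ v} | ReflTransGen H' u ⟨s, hsv⟩} := by
          intro u hu
          rcases hsubB hu with heq | hmem
          · exact absurd (heq ▸ hu) hvnot
          · exact hmem
        calc Set.ncard {u | ReflTransGen H u s}
            ≤ Set.ncard (Subtype.val ''
                {u : {x : V // x ≠ v} | ReflTransGen H' u ⟨s, hsv⟩}) :=
              Set.ncard_le_ncard hsub2 (Set.toFinite _)
          _ = Set.ncard {u : {x : V // x ≠ v} | ReflTransGen H' u ⟨s, hsv⟩} :=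
              Set.ncard_image_of_injective _ Subtype.val_injective
          _ ≤ lam := hcnt' _ hs'
    exact ⟨H, hHsub, hacyc, hout, hcnt⟩
end
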